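/- arXiv:1810.11969 — 7 statements merged into one kernel-verified Lean document; each statement's English description precedes it below -/
import Mathlib

section
/- The binary Krawtchouk polynomials satisfy the Christoffel–Darboux formula: for all natural numbers t < n and all real (or rational) a, x, P_{t+1}(x) P_t(a) - P_t(x) P_{t+1}(a) = (2(a - x)/(t+1)) * C(n, t) * ∑_{i=0}^{t} P_i(x) P_i(a) / C(n, i). -/
/-- Generalized binomial coefficient `C(x, j) = x(x-1)⋯(x-j+1)/j!` with a real
argument. -/
noncomputable def rchoose (x : ℝ) (j : ℕ) : ℝ :=
  (∏ t ∈ Finset.range j, (x - t)) / (Nat.factorial j : ℝ)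

/-- Binary Krawtchouk polynomial with parameter `n`, as a function of a real
variable `x`. -/
noncomputable def krawR (n k : ℕ) (x : ℝ) : ℝ :=
  ∑ j ∈ Finset.range (k + 1),
    (-1 : ℝ) ^ j * rchoose x j * rchoose ((n : ℝ) - x) (k - j)

lemma rchoose_succ (y : ℝ) (m : ℕ) :
    ((m:ℝ)+1) * rchoose y (m+1) = (y - m) * rchoose y m := by
  unfold rchoose
  rw [Finset.prod_range_succ, Nat.factorial_succ]
  have h0 : (Nat.factorial m : ℝ) ≠ 0 := Nat.cast_ne_zero.mpr (Nat.factorial_ne_zero m)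
  push_cast
  field_simp

lemma kraw_rec (n k : ℕ) (x : ℝ) :
    ((k:ℝ)+2) * krawR n (k+2) x
      = ((n:ℝ) - 2*x) * krawR n (k+1) x - ((n:ℝ) - k) * krawR n k x := by
  set c : ℕ → ℝ := rchoose x with hc
  set d : ℕ → ℝ := rchoose ((n:ℝ) - x) with hd
  -- the four auxiliary sums
  set U : ℝ := ∑ j ∈ Finset.range (k+2), (-1:ℝ)^j * (((k:ℝ)+2-j) * c j * d (k+2-j)) with hU0
  set V : ℝ := ∑ j ∈ Finset.range (k+2), (-1:ℝ)^j * (((j:ℝ)+1) * c (j+1) * d (k+1-j)) with hV0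
  set W : ℝ := ∑ j ∈ Finset.range (k+2), (-1:ℝ)^j * ((j:ℝ) * c j * d (k+1-j)) with hW0
  set X : ℝ := ∑ j ∈ Finset.range (k+2), (-1:ℝ)^j * (((k:ℝ)+1-j) * c j * d (k+1-j)) with hX0
  have hcs : ∀ j : ℕ, ((j:ℝ)+1) * c (j+1) = (x - j) * c j := fun j => rchoose_succ x j
  have hds : ∀ m : ℕ, ((m:ℝ)+1) * d (m+1) = (((n:ℝ)-x) - m) * d m := fun m => rchoose_succ _ m
  -- (1)
  have h1 : ((k:ℝ)+2) * krawR n (k+2) x = U - V := by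
    rw [krawR, Finset.mul_sum]
    have e : ∀ j ∈ Finset.range (k+2+1),
        ((k:ℝ)+2) * ((-1:ℝ)^j * rchoose x j * rchoose ((n:ℝ)-x) (k+2-j))
          = (-1:ℝ)^j * (((k:ℝ)+2-j) * c j * d (k+2-j))
            + (-1:ℝ)^j * ((j:ℝ) * c j * d (k+2-j)) := by
      intro j _
      rw [← hc, ← hd]; ring
    rw [Finset.sum_congr rfl e, Finset.sum_add_distrib]
    have eU : ∑ j ∈ Finset.range (k+2+1), (-1:ℝ)^j * (((k:ℝ)+2-j) * c j * d (k+2-j)) = U := by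
      rw [Finset.sum_range_succ]
      have : ((k:ℝ)+2-((k+2:ℕ):ℝ)) = 0 := by push_cast; ring
      rw [this]
      simp [hU0]
    have eV : ∑ j ∈ Finset.range (k+2+1), (-1:ℝ)^j * ((j:ℝ) * c j * d (k+2-j)) = -V := by
      rw [Finset.sum_range_succ']
      simp only [Nat.cast_zero, zero_mul, mul_zero, add_zero, Nat.cast_succ]
      rw [hV0, ← Finset.sum_neg_distrib]
      refine Finset.sum_congr rfl ?_
      intro j hj
      have : k+2-(j+1) = k+1-j := by omega
      rw [this]
      push_cast
      ring
    rw [eU, eV]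
    ring
  -- (2)
  have h2 : ((n:ℝ) - 2*x) * krawR n (k+1) x = (U + X) - (V + W) := by
    rw [krawR, Finset.mul_sum]
    have e : ∀ j ∈ Finset.range (k+1+1),
        ((n:ℝ)-2*x) * ((-1:ℝ)^j * rchoose x j * rchoose ((n:ℝ)-x) (k+1-j))
          = (-1:ℝ)^j * (((k:ℝ)+2-j) * c j * d (k+2-j))
            + (-1:ℝ)^j * (((k:ℝ)+1-j) * c j * d (k+1-j))
            - ((-1:ℝ)^j * (((j:ℝ)+1) * c (j+1) * d (k+1-j))
               + (-1:ℝ)^j * ((j:ℝ) * c j * d (k+1-j))) := by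
      intro j hj
      have hj' : j ≤ k+1 := by simpa using Nat.lt_succ_iff.mp (Finset.mem_range.mp hj)
      have hd1 := hds (k+1-j)
      rw [show k+1-j+1 = k+2-j from by omega] at hd1
      rw [Nat.cast_sub hj'] at hd1
      push_cast at hd1
      have hc1 := hcs j
      rw [← hc, ← hd]
      linear_combination (-(-1:ℝ)^j * c j) * hd1 + ((-1:ℝ)^j * d (k+1-j)) * hc1
    rw [Finset.sum_congr rfl e]
    rw [Finset.sum_sub_distrib, Finset.sum_add_distrib, Finset.sum_add_distrib]
  -- (3)
  have h3 : ((n:ℝ) - k) * krawR n k x = X - W := by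
    rw [krawR, Finset.mul_sum]
    have e : ∀ j ∈ Finset.range (k+1),
        ((n:ℝ)-k) * ((-1:ℝ)^j * rchoose x j * rchoose ((n:ℝ)-x) (k-j))
          = (-1:ℝ)^j * (((k:ℝ)+1-j) * c j * d (k+1-j))
            + (-1:ℝ)^j * (((j:ℝ)+1) * c (j+1) * d (k-j)) := by
      intro j hj
      have hj' : j ≤ k := Nat.lt_succ_iff.mp (Finset.mem_range.mp hj)
      have hd1 := hds (k-j)
      rw [show k-j+1 = k+1-j from by omega] at hd1
      rw [Nat.cast_sub hj'] at hd1
      push_cast at hd1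
      have hc1 := hcs j
      rw [← hc, ← hd]
      linear_combination (-(-1:ℝ)^j * c j) * hd1 - ((-1:ℝ)^j * d (k-j)) * hc1
    rw [Finset.sum_congr rfl e, Finset.sum_add_distrib]
    have eX : X = ∑ j ∈ Finset.range (k+1), (-1:ℝ)^j * (((k:ℝ)+1-j) * c j * d (k+1-j)) := by
      rw [hX0, Finset.sum_range_succ]
      have : ((k:ℝ)+1-((k+1:ℕ):ℝ)) = 0 := by push_cast; ring
      rw [this]
      simp
    have eW : W = -∑ j ∈ Finset.range (k+1), (-1:ℝ)^j * (((j:ℝ)+1) * c (j+1) * d (k-j)) := by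
      rw [hW0, Finset.sum_range_succ']
      simp only [Nat.cast_zero, zero_mul, mul_zero, add_zero]
      rw [← Finset.sum_neg_distrib]
      refine Finset.sum_congr rfl ?_
      intro j hj
      have : k+1-(j+1) = k-j := by omega
      rw [this]
      push_cast
      ring
    rw [eX, eW]
    ring
  linarith [h1, h2, h3]

lemma krawR_zero (n : ℕ) (x : ℝ) : krawR n 0 x = 1 := by
  simp [krawR, rchoose]

lemma krawR_one (n : ℕ) (x : ℝ) : krawR n 1 x = (n:ℝ) - 2*x := by
  simp [krawR, rchoose, Finset.sum_range_succ, Nat.factorial]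
  ring

/-- Christoffel–Darboux formula for the binary Krawtchouk polynomials. -/
theorem kraw_christoffel_darboux (n t : ℕ) (ht : t < n) (a x : ℝ) :
    krawR n (t + 1) x * krawR n t a - krawR n t x * krawR n (t + 1) a
      = (2 * (a - x) / ((t : ℝ) + 1)) * (Nat.choose n t : ℝ) *
          ∑ i ∈ Finset.range (t + 1),
            krawR n i x * krawR n i a / (Nat.choose n i : ℝ) := by
  revert ht
  induction t with
  | zero =>
    intro ht
    simp [krawR_zero, krawR_one]
    ring
  | succ s ih =>
    intro ht
    have hs : s < n := Nat.lt_of_succ_lt ht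
    have ihs := ih hs
    have hx := kraw_rec n s x
    have ha := kraw_rec n s a
    have key : ((s:ℝ)+2) * (krawR n (s+2) x * krawR n (s+1) a - krawR n (s+1) x * krawR n (s+2) a)
        = 2*(a-x) * (krawR n (s+1) x * krawR n (s+1) a)
          + ((n:ℝ)-s) * (krawR n (s+1) x * krawR n s a - krawR n s x * krawR n (s+1) a) := by
      linear_combination (krawR n (s+1) a) * hx - (krawR n (s+1) x) * ha
    have hch : (Nat.choose n (s+1) : ℝ) * ((s:ℝ)+1) = (Nat.choose n s : ℝ) * ((n:ℝ) - s) := by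
      have := Nat.choose_succ_right_eq n s
      have hc := congrArg (fun m : ℕ => (m : ℝ)) this
      push_cast [Nat.cast_sub hs.le] at hc
      linarith [hc]
    have hC1 : (Nat.choose n (s+1) : ℝ) ≠ 0 :=
      Nat.cast_ne_zero.mpr (Nat.choose_pos ht.le).ne'
    have hC0 : (Nat.choose n s : ℝ) ≠ 0 :=
      Nat.cast_ne_zero.mpr (Nat.choose_pos hs.le).ne'
    have h2 : ((s:ℝ)+2) ≠ 0 := by positivity
    have h1 : ((s:ℝ)+1) ≠ 0 := by positivity
    rw [Finset.sum_range_succ]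
    push_cast
    rw [show s+1+1 = s+2 from rfl] at *
    field_simp
    field_simp at ihs
    have hD : ((n:ℝ)-s) * (krawR n (s+1) x * krawR n s a - krawR n s x * krawR n (s+1) a)
        = 2*(a-x) * (Nat.choose n (s+1) : ℝ) *
            ∑ i ∈ Finset.range (s+1), krawR n i x * krawR n i a / (Nat.choose n i : ℝ) := by
      have h' : (((n:ℝ)-s) * (krawR n (s+1) x * krawR n s a - krawR n s x * krawR n (s+1) a)) * ((s:ℝ)+1)
          = (2*(a-x) * (Nat.choose n (s+1) : ℝ) *
              ∑ i ∈ Finset.range (s+1), krawR n i x * krawR n i a / (Nat.choose n i : ℝ)) * ((s:ℝ)+1) := by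
        linear_combination ((n:ℝ)-(s:ℝ)) * ihs
          - (2*(a-x) * ∑ i ∈ Finset.range (s+1), krawR n i x * krawR n i a / (Nat.choose n i : ℝ)) * hch
      exact mul_right_cancel₀ h1 h'
    linear_combination key + hD
end

section
/- For binary Krawtchouk polynomials with parameter n, the identity ∑_{i=0}^{n} C(n - i, n - j) * P_i(x) = 2^j * C(n - x, j) holds for all natural numbers j ≤ n and all integer arguments x with 0 ≤ x ≤ n. -/
open Finset

/-- Trinomial revision, valid for all naturals. -/
lemma tri_choose (x a c : ℕ) :
    x.choose a * (x - a).choose c = x.choose c * (x - c).choose a := by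
  by_cases h : a + c ≤ x
  · have h1 := Nat.choose_mul (n := x) (k := a + c) (s := a) (Nat.le_add_right a c)
    have h2 := Nat.choose_mul (n := x) (k := a + c) (s := c) (Nat.le_add_left c a)
    have e1 : a + c - a = c := by omega
    have e2 : a + c - c = a := by omega
    rw [e1] at h1; rw [e2] at h2
    have hsymm : (a + c).choose a = (a + c).choose c := Nat.choose_symm_add
    rw [← h1, ← h2, hsymm]
  · rcases le_or_gt a x with hax | hax
    · rcases le_or_gt c x with hcx | hcx
      · rw [Nat.choose_eq_zero_of_lt (by omega : x - a < c),
          Nat.choose_eq_zero_of_lt (by omega : x - c < a)]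
        ring
      · rw [Nat.choose_eq_zero_of_lt hcx, Nat.choose_eq_zero_of_lt (by omega : x - a < c)]
        ring
    · rcases le_or_gt c x with hcx | hcx
      · rw [Nat.choose_eq_zero_of_lt hax, Nat.choose_eq_zero_of_lt (by omega : x - c < a)]
        ring
      · rw [Nat.choose_eq_zero_of_lt hax, Nat.choose_eq_zero_of_lt hcx]
        ring

lemma sum_choose_mul (N m : ℕ) :
    ∑ b ∈ range (N + 1), N.choose b * (N - b).choose m = N.choose m * 2 ^ (N - m) := by
  have h : ∀ b ∈ range (N + 1), N.choose b * (N - b).choose m = N.choose m * (N - m).choose b :=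
    fun b _ => tri_choose N b m
  rw [Finset.sum_congr rfl h, ← Finset.mul_sum]
  congr 1
  rw [← Nat.sum_range_choose (N - m)]
  refine (Finset.sum_subset (Finset.range_subset_range.2 (by omega : N - m + 1 ≤ N + 1)) ?_).symm
  intro b _ hb
  simp only [mem_range, not_lt] at hb
  exact Nat.choose_eq_zero_of_lt (by omega)

lemma triangle (f : ℕ → ℕ → ℤ) :
    ∀ N, ∑ i ∈ range N, ∑ a ∈ range (i + 1), f a (i - a)
      = ∑ a ∈ range N, ∑ b ∈ range (N - a), f a b
  | 0 => by simp
  | (N + 1) => by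
    rw [Finset.sum_range_succ, triangle f N]
    have h1 : ∑ a ∈ range (N + 1), ∑ b ∈ range (N + 1 - a), f a b
        = ∑ a ∈ range (N + 1), ((∑ b ∈ range (N - a), f a b) + f a (N - a)) := by
      refine Finset.sum_congr rfl fun a ha => ?_
      have : N + 1 - a = (N - a) + 1 := by simp only [mem_range] at ha; omega
      rw [this, Finset.sum_range_succ]
    rw [h1, Finset.sum_add_distrib,
      Finset.sum_range_succ (fun a => ∑ b ∈ range (N - a), f a b)]
    simp

lemma alt_sum (n x c : ℕ) (hx : x ≤ n) :
    ∑ a ∈ range (n + 1), (-1 : ℤ) ^ a * (x.choose a : ℤ) * ((x - a).choose c : ℤ)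
      = if c = x then 1 else 0 := by
  have h : ∀ a ∈ range (n + 1),
      (-1 : ℤ) ^ a * (x.choose a : ℤ) * ((x - a).choose c : ℤ)
        = (x.choose c : ℤ) * ((-1 : ℤ) ^ a * ((x - c).choose a : ℤ)) := by
    intro a _
    have := tri_choose x a c
    have h2 : ((x.choose a : ℤ)) * ((x - a).choose c : ℤ)
        = (x.choose c : ℤ) * ((x - c).choose a : ℤ) := by exact_mod_cast congrArg (Nat.cast : ℕ → ℤ) this
    rw [mul_assoc, h2]; ring
  rw [Finset.sum_congr rfl h, ← Finset.mul_sum]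
  have hsub : ∑ a ∈ range (n + 1), (-1 : ℤ) ^ a * ((x - c).choose a : ℤ)
      = ∑ a ∈ range ((x - c) + 1), (-1 : ℤ) ^ a * ((x - c).choose a : ℤ) := by
    refine (Finset.sum_subset (Finset.range_subset_range.2 (by omega)) ?_).symm
    intro a _ ha
    simp only [mem_range, not_lt] at ha
    rw [Nat.choose_eq_zero_of_lt (by omega)]
    simp
  rw [hsub, Int.alternating_sum_range_choose]
  rcases eq_or_ne c x with rfl | hne
  · simp
  · rcases le_or_gt c x with hcx | hcx
    · rw [if_neg (by omega : x - c ≠ 0), if_neg hne]; ring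
    · rw [Nat.choose_eq_zero_of_lt hcx, if_neg hne]; simp

/-- Binary Krawtchouk polynomial (q = 2) with parameter `n`, evaluated at a
natural number argument `x`. -/
def kraw (n k x : ℕ) : ℤ :=
  ∑ j ∈ Finset.range (k + 1),
    (-1 : ℤ) ^ j * (Nat.choose x j : ℤ) * (Nat.choose (n - x) (k - j) : ℤ)

/-- `∑_{i=0}^n C(n-i, n-j) P_i(x) = 2^j C(n-x, j)` for `j ≤ n` and `0 ≤ x ≤ n`. -/
theorem kraw_binomial_sum (n j x : ℕ) (hj : j ≤ n) (hx : x ≤ n) :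
    ∑ i ∈ Finset.range (n + 1), (Nat.choose (n - i) (n - j) : ℤ) * kraw n i x
      = 2 ^ j * (Nat.choose (n - x) j : ℤ) := by
  set F : ℕ → ℕ → ℤ := fun a b =>
    (-1 : ℤ) ^ a * (x.choose a : ℤ) * ((n - x).choose b : ℤ) * ((n - (a + b)).choose (n - j) : ℤ)
    with hF
  have step1 : ∑ i ∈ Finset.range (n + 1), (Nat.choose (n - i) (n - j) : ℤ) * kraw n i x
      = ∑ i ∈ Finset.range (n + 1), ∑ a ∈ Finset.range (i + 1), F a (i - a) := by
    refine Finset.sum_congr rfl fun i _ => ?_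
    rw [kraw, Finset.mul_sum]
    refine Finset.sum_congr rfl fun a ha => ?_
    simp only [Finset.mem_range] at ha
    have : a + (i - a) = i := by omega
    rw [hF]; dsimp only
    rw [this]; ring
  rw [step1, triangle F (n + 1)]
  have step3 : ∀ a ∈ Finset.range (n + 1),
      ∑ b ∈ Finset.range (n + 1 - a), F a b
        = ∑ c ∈ Finset.range (n - j + 1),
            ((-1 : ℤ) ^ a * (x.choose a : ℤ) * ((x - a).choose c : ℤ))
              * (((n - x).choose (n - j - c) : ℤ) * 2 ^ ((n - x) - (n - j - c))) := by
    intro a ha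
    simp only [Finset.mem_range] at ha
    by_cases hax : a ≤ x
    · have hsub : ∑ b ∈ Finset.range (n + 1 - a), F a b
          = ∑ b ∈ Finset.range (n - x + 1), F a b := by
        refine (Finset.sum_subset (Finset.range_subset_range.2 (by omega)) ?_).symm
        intro b _ hb
        simp only [Finset.mem_range, not_lt] at hb
        rw [hF]; dsimp only
        rw [Nat.choose_eq_zero_of_lt (by omega : n - x < b)]
        simp
      rw [hsub]
      have expand : ∀ b ∈ Finset.range (n - x + 1),
          F a b = ∑ c ∈ Finset.range (n - j + 1),
            ((-1 : ℤ) ^ a * (x.choose a : ℤ) * ((x - a).choose c : ℤ))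
              * (((n - x).choose b : ℤ) * (((n - x) - b).choose (n - j - c) : ℤ)) := by
        intro b hb
        simp only [Finset.mem_range] at hb
        have hsplit : n - (a + b) = (x - a) + ((n - x) - b) := by omega
        have hvdm : ((x - a) + ((n - x) - b)).choose (n - j)
            = ∑ c ∈ Finset.range (n - j + 1),
                (x - a).choose c * ((n - x) - b).choose (n - j - c) := by
          rw [Nat.add_choose_eq, Finset.Nat.sum_antidiagonal_eq_sum_range_succ_mk]
        rw [hF]; dsimp only
        rw [hsplit, hvdm]
        push_cast
        rw [Finset.mul_sum]
        refine Finset.sum_congr rfl fun c _ => by ring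
      rw [Finset.sum_congr rfl expand, Finset.sum_comm]
      refine Finset.sum_congr rfl fun c _ => ?_
      rw [← Finset.mul_sum]
      congr 1
      have := sum_choose_mul (n - x) (n - j - c)
      calc ∑ b ∈ Finset.range (n - x + 1),
            (((n - x).choose b : ℤ) * (((n - x) - b).choose (n - j - c) : ℤ))
          = ((∑ b ∈ Finset.range (n - x + 1),
              (n - x).choose b * ((n - x) - b).choose (n - j - c) : ℕ) : ℤ) := by push_cast; rfl
        _ = (((n - x).choose (n - j - c) * 2 ^ ((n - x) - (n - j - c)) : ℕ) : ℤ) := by rw [this]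
        _ = ((n - x).choose (n - j - c) : ℤ) * 2 ^ ((n - x) - (n - j - c)) := by push_cast; rfl
    · have hz : x.choose a = 0 := Nat.choose_eq_zero_of_lt (by omega)
      rw [hF]
      simp [hz]
  rw [Finset.sum_congr rfl step3, Finset.sum_comm]
  have step4 : ∀ c ∈ Finset.range (n - j + 1),
      ∑ a ∈ Finset.range (n + 1),
          ((-1 : ℤ) ^ a * (x.choose a : ℤ) * ((x - a).choose c : ℤ))
            * (((n - x).choose (n - j - c) : ℤ) * 2 ^ ((n - x) - (n - j - c)))
        = if c = x then (((n - x).choose (n - j - c) : ℤ) * 2 ^ ((n - x) - (n - j - c))) else 0 := by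
    intro c _
    rw [← Finset.sum_mul, alt_sum n x c hx]
    split_ifs <;> ring
  rw [Finset.sum_congr rfl step4, Finset.sum_ite_eq' (Finset.range (n - j + 1)) x
    (fun c => ((n - x).choose (n - j - c) : ℤ) * 2 ^ ((n - x) - (n - j - c)))]
  by_cases hxj : x ≤ n - j
  · rw [if_pos (Finset.mem_range.2 (by omega))]
    have h1 : (n - x) - (n - j - x) = j := by omega
    have h2 : (n - x).choose (n - j - x) = (n - x).choose j := by
      have : n - j - x = (n - x) - j := by omega
      rw [this, Nat.choose_symm (by omega : j ≤ n - x)]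
    rw [h1, h2]; ring
  · rw [if_neg (by simp only [Finset.mem_range]; omega)]
    rw [Nat.choose_eq_zero_of_lt (by omega : n - x < j)]
    simp
end

section
/- Any product of binary Krawtchouk polynomials expands as P_i(x) * P_j(x) = ∑_{k=0}^{n} C(n - k, (i + j - k)/2) * C(k, (i - j + k)/2) * P_k(x), where a binomial coefficient with a fractional (non-integer) or negative lower index is interpreted as zero; the identity holds for all integer arguments x with 0 ≤ x ≤ n and all 0 ≤ i, j ≤ n. -/
/-- Binomial coefficient `C(m, b/2)` where the lower index is the (possibly
fractional or negative) half of an integer `b`: it is `0` unless `b` is a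
nonnegative even integer. -/
def halfChoose (m : ℕ) (b : ℤ) : ℤ :=
  if 0 ≤ b ∧ 2 ∣ b then (Nat.choose m (b / 2).toNat : ℤ) else 0


lemma kraw_zero (n x : ℕ) : kraw n 0 x = 1 := by simp [kraw]

lemma kraw_eq_zero_of_gt (n k x : ℕ) (hx : x ≤ n) (hk : n < k) : kraw n k x = 0 := by
  apply Finset.sum_eq_zero
  intro j hj
  rcases le_or_gt j x with h | h
  · have : (n - x) < (k - j) := by omega
    rw [Nat.choose_eq_zero_of_lt this]
    ring
  · rw [Nat.choose_eq_zero_of_lt h]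
    push_cast; ring

lemma kraw_succ (n k x : ℕ) (hx : x ≤ n) :
    kraw (n+1) (k+1) x = kraw n (k+1) x + kraw n k x := by
  unfold kraw
  rw [show n + 1 - x = (n - x) + 1 from by omega]
  have step : ∀ j ∈ Finset.range (k+2),
      (-1 : ℤ) ^ j * (Nat.choose x j : ℤ) * (Nat.choose ((n-x)+1) (k+1-j) : ℤ)
      = (-1 : ℤ) ^ j * (Nat.choose x j : ℤ) * (Nat.choose (n-x) (k+1-j) : ℤ)
        + (if j ≤ k then (-1 : ℤ) ^ j * (Nat.choose x j : ℤ) * (Nat.choose (n-x) (k-j) : ℤ) else 0) := by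
    intro j hj
    by_cases hjk : j ≤ k
    · rw [if_pos hjk, show k + 1 - j = (k - j) + 1 from by omega, Nat.choose_succ_succ]
      push_cast; ring
    · have hj1 : j = k + 1 := by simp at hj; omega
      subst hj1
      simp
  rw [Finset.sum_congr rfl step, Finset.sum_add_distrib]
  congr 1
  rw [Finset.sum_range_succ, if_neg (by omega)]
  simp only [add_zero]
  apply Finset.sum_congr rfl
  intro j hj
  rw [if_pos (by simp at hj; omega)]

lemma kraw_at_n (n k : ℕ) : kraw n k n = (-1 : ℤ)^k * (Nat.choose n k : ℤ) := by
  unfold kraw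
  rw [Nat.sub_self]
  rw [Finset.sum_eq_single k]
  · simp
  · intro j hj hne
    have : j < k := by simp at hj; omega
    rw [Nat.choose_eq_zero_of_lt (by omega : 0 < k - j)]
    simp
  · intro h; simp at h

lemma shift' {R : Type*} [CommRing R] (A B : R) (ε : ℤ) (a b : ℕ → ℤ) (n : ℕ)
    (h0 : a 0 = 1) (hn : a (n+1) = 0) (hb0 : b 0 = 1)
    (hb : ∀ k, b (k+1) = a (k+1) + ε * a k) :
    (∑ k ∈ Finset.range (n+1), (a k : R) * (B^k * A^(n-k))) * (A + (ε : R) * B)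
      = ∑ k ∈ Finset.range (n+2), (b k : R) * (B^k * A^(n+1-k)) := by
  have e1 : (∑ k ∈ Finset.range (n+1), (a k : R) * (B^k * A^(n-k))) * (A + (ε : R) * B)
      = (∑ k ∈ Finset.range (n+1), (a k : R) * (B^k * A^(n-k)) * A)
        + (∑ k ∈ Finset.range (n+1), (ε : R) * (a k : R) * (B^(k+1) * A^(n-k))) := by
    rw [mul_add, Finset.sum_mul, Finset.sum_mul]
    congr 1
    apply Finset.sum_congr rfl
    intro k hk; ring
  have e2 : ∀ k ∈ Finset.range (n+1), (a k : R) * (B^k * A^(n-k)) * A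
      = (a k : R) * (B^k * A^(n+1-k)) := by
    intro k hk
    simp only [Finset.mem_range] at hk
    rw [show n + 1 - k = (n - k) + 1 from by omega, pow_succ]
    ring
  rw [e1, Finset.sum_congr rfl e2]
  -- RHS
  rw [Finset.sum_range_succ' (fun k => (b k : R) * (B^k * A^(n+1-k))) (n+1)]
  simp only [hb, hb0]
  have e3 : ∀ k ∈ Finset.range (n+1),
      ((a (k+1) + ε * a k : ℤ) : R) * (B^(k+1) * A^(n+1-(k+1)))
      = (a (k+1) : R) * (B^(k+1) * A^(n-k)) + (ε : R) * (a k : R) * (B^(k+1) * A^(n-k)) := by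
    intro k hk
    rw [show n + 1 - (k+1) = n - k from by omega]
    push_cast; ring
  rw [Finset.sum_congr rfl e3, Finset.sum_add_distrib]
  -- LHS first sum: peel k = 0
  rw [Finset.sum_range_succ' (fun k => (a k : R) * (B^k * A^(n+1-k))) n]
  have e4 : ∑ k ∈ Finset.range (n+1), (a (k+1) : R) * (B^(k+1) * A^(n-k))
      = ∑ k ∈ Finset.range n, (a (k+1) : R) * (B^(k+1) * A^(n-k)) := by
    rw [Finset.sum_range_succ, hn]
    simp
  rw [e4, h0]
  have e5 : ∀ k ∈ Finset.range n,
      (a (k+1) : R) * (B^(k+1) * A^(n+1-(k+1))) = (a (k+1) : R) * (B^(k+1) * A^(n-k)) := by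
    intro k hk; rw [show n + 1 - (k+1) = n - k from by omega]
  rw [Finset.sum_congr rfl e5]
  push_cast
  ring

lemma gen {R : Type*} [CommRing R] (A B : R) :
    ∀ n x : ℕ, x ≤ n →
      (A - B)^x * (A + B)^(n - x)
        = ∑ k ∈ Finset.range (n+1), (kraw n k x : R) * (B^k * A^(n-k)) := by
  intro n
  induction n with
  | zero =>
    intro x hx
    interval_cases x
    simp [kraw]
  | succ n ih =>
    intro x hx
    rcases Nat.lt_or_ge x (n+1) with h | h
    · have hxn : x ≤ n := by omega
      rw [show n + 1 - x = (n - x) + 1 from by omega, pow_succ, ← mul_assoc, ih x hxn]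
      have := shift' (R := R) A B 1 (fun k => kraw n k x) (fun k => kraw (n+1) k x) n
        (kraw_zero n x) (kraw_eq_zero_of_gt n (n+1) x hxn (by omega)) (kraw_zero (n+1) x)
        (fun k => by
          show kraw (n+1) (k+1) x = kraw n (k+1) x + 1 * kraw n k x
          rw [kraw_succ n k x hxn]; ring)
      simpa using this
    · have hx1 : x = n + 1 := by omega
      subst hx1
      rw [Nat.sub_self, pow_zero, mul_one, pow_succ]
      have ihn := ih n le_rfl
      rw [Nat.sub_self, pow_zero, mul_one] at ihn
      rw [mul_comm ((A-B)^n) (A - B), mul_comm (A - B) ((A-B)^n), ihn]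
      have := shift' (R := R) A B (-1) (fun k => kraw n k n) (fun k => kraw (n+1) k (n+1)) n
        (kraw_zero n n) (kraw_eq_zero_of_gt n (n+1) n le_rfl (by omega)) (kraw_zero (n+1) (n+1))
        (fun k => by
          show kraw (n+1) (k+1) (n+1) = kraw n (k+1) n + (-1) * kraw n k n
          rw [kraw_at_n, kraw_at_n, kraw_at_n, Nat.choose_succ_succ]
          push_cast; ring)
      rw [show (A + ((-1 : ℤ) : R) * B) = A - B from by push_cast; ring] at this
      rw [this]

open Polynomial

lemma coeff_mono (m : ℤ) (a b i j : ℕ) :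
    ((((m : Polynomial (Polynomial ℤ)) * ((X:Polynomial (Polynomial ℤ))^a * C (X^b))).coeff i).coeff j)
      = if i = a ∧ j = b then m else 0 := by
  rw [coeff_intCast_mul, mul_comm ((X:Polynomial (Polynomial ℤ))^a) (C (X^b)), coeff_C_mul,
    coeff_X_pow]
  split_ifs with h1 h2 h2 <;> simp_all [coeff_intCast_mul, coeff_X_pow]

lemma coeffLHS (c : ℕ → ℤ) (n i j : ℕ) (hi : i ≤ n) (hj : j ≤ n) :
    (((∑ i' ∈ Finset.range (n+1), (c i' : Polynomial (Polynomial ℤ)) * X ^ i')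
      * (∑ j' ∈ Finset.range (n+1), (c j' : Polynomial (Polynomial ℤ)) * (C X) ^ j')).coeff i).coeff j
    = c i * c j := by
  rw [Finset.sum_mul_sum]
  have e : ∀ i' ∈ Finset.range (n+1), ∀ j' ∈ Finset.range (n+1),
      ((c i' : Polynomial (Polynomial ℤ)) * X ^ i') * ((c j' : Polynomial (Polynomial ℤ)) * (C X) ^ j')
      = ((c i' * c j' : ℤ) : Polynomial (Polynomial ℤ)) * ((X:Polynomial (Polynomial ℤ))^i' * C (X^j')) := by
    intro i' _ j' _
    rw [← map_pow]
    push_cast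
    ring
  rw [Finset.sum_congr rfl (fun i' hi' => Finset.sum_congr rfl (e i' hi'))]
  simp only [finset_sum_coeff, coeff_mono, ite_and]
  simp [Finset.sum_ite_eq, Nat.lt_succ_iff, hi, hj]




lemma crunch (m k i j : ℕ) :
    (∑ a ∈ Finset.range (k+1), ∑ b ∈ Finset.range (m+1),
       if i = a + b ∧ j = k - a + b then ((k.choose a : ℤ) * (m.choose b : ℤ)) else 0)
    = halfChoose m ((i:ℤ)+j-k) * halfChoose k ((i:ℤ)-j+k) := by
  rw [← Finset.sum_product']
  by_cases H : k ≤ i + j ∧ j ≤ i + k ∧ (i + j - k) % 2 = 0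
  · obtain ⟨h1, h2, h3⟩ := H
    set a0 := (i + k - j)/2 with ha0
    set b0 := (i + j - k)/2 with hb0
    have hha : halfChoose k ((i:ℤ)-j+k) = (k.choose a0 : ℤ) := by
      rw [halfChoose, if_pos (by omega), show (((i:ℤ)-j+k) / 2).toNat = a0 from by omega]
    have hhb : halfChoose m ((i:ℤ)+j-k) = (m.choose b0 : ℤ) := by
      rw [halfChoose, if_pos (by omega), show (((i:ℤ)+j-k) / 2).toNat = b0 from by omega]
    rw [Finset.sum_eq_single (a0, b0)]
    · rw [hha, hhb]
      rcases le_or_gt a0 k with ha | ha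
      · rw [if_pos (by constructor <;> omega)]
        ring
      · rw [Nat.choose_eq_zero_of_lt ha]
        push_cast
        split <;> ring
    · rintro ⟨a, b⟩ hab hne
      simp only [Finset.mem_product, Finset.mem_range] at hab
      split_ifs with h
      · exfalso
        apply hne
        have : a = a0 ∧ b = b0 := by omega
        simp [Prod.ext_iff, this.1, this.2]
      · rfl
    · intro hnm
      simp only [Finset.mem_product, Finset.mem_range, not_and_or, not_lt] at hnm
      split_ifs with h
      · rcases hnm with hc | hc
        · have hz : k.choose a0 = 0 := Nat.choose_eq_zero_of_lt (by omega)
          simp [hz]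
        · have hz : m.choose b0 = 0 := Nat.choose_eq_zero_of_lt (by omega)
          simp [hz]
      · rfl
  · rw [Finset.sum_eq_zero]
    · have : ¬(0 ≤ (i:ℤ)+(j:ℤ)-(k:ℤ) ∧ 2 ∣ ((i:ℤ)+(j:ℤ)-(k:ℤ))) ∨
          ¬(0 ≤ (i:ℤ)-(j:ℤ)+(k:ℤ) ∧ 2 ∣ ((i:ℤ)-(j:ℤ)+(k:ℤ))) := by omega
      rcases this with hc | hc
      · rw [halfChoose, if_neg hc, zero_mul]
      · rw [halfChoose, halfChoose, if_neg hc, mul_zero]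
    · rintro ⟨a, b⟩ hab
      simp only [Finset.mem_product, Finset.mem_range] at hab
      rw [if_neg (by omega)]

open Polynomial in
lemma key (n x : ℕ) (hx : x ≤ n) :
    (∑ i ∈ Finset.range (n+1), (kraw n i x : Polynomial (Polynomial ℤ)) * X ^ i)
      * (∑ j ∈ Finset.range (n+1), (kraw n j x : Polynomial (Polynomial ℤ)) * (C X) ^ j)
    = ∑ k ∈ Finset.range (n+1), (kraw n k x : Polynomial (Polynomial ℤ))
        * ((X + C X) ^ k * (1 + X * C X) ^ (n - k)) := by
  set R := Polynomial (Polynomial ℤ)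
  have e1 := gen (1 : R) X n x hx
  have e2 := gen (1 : R) (C X) n x hx
  have e3 := gen (1 + (X : R) * C X) (X + C X) n x hx
  simp only [one_pow, mul_one] at e1 e2
  have lhs3 : ((1 + (X : R) * C X) - (X + C X))^x * ((1 + (X : R) * C X) + (X + C X))^(n-x)
      = ((1 : R) - X)^x * (1 + X)^(n-x) * (((1 : R) - C X)^x * (1 + C X)^(n-x)) := by
    rw [show (1 + (X : R) * C X) - (X + C X) = (1 - X) * (1 - C X) from by ring,
        show (1 + (X : R) * C X) + (X + C X) = (1 + X) * (1 + C X) from by ring,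
        mul_pow, mul_pow]
    ring
  rw [← e1, ← e2, ← lhs3, e3]

open Polynomial in
lemma coeffRHS (m k i j : ℕ) :
    ((((X : Polynomial (Polynomial ℤ)) + C X) ^ k * (1 + X * C X) ^ m).coeff i).coeff j
      = halfChoose m ((i:ℤ)+j-k) * halfChoose k ((i:ℤ)-j+k) := by
  rw [add_pow, show ((1 : Polynomial (Polynomial ℤ)) + X * C X) = X * C X + 1 from by ring,
    add_pow, Finset.sum_mul_sum]
  have e : ∀ a ∈ Finset.range (k+1), ∀ b ∈ Finset.range (m+1),
      ((X : Polynomial (Polynomial ℤ))^a * (C X)^(k-a) * ((k.choose a : ℕ) : Polynomial (Polynomial ℤ)))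
        * ((X * C X)^b * (1 : Polynomial (Polynomial ℤ))^(m-b) * ((m.choose b : ℕ) : Polynomial (Polynomial ℤ)))
      = ((((k.choose a : ℤ) * (m.choose b : ℤ)) : ℤ) : Polynomial (Polynomial ℤ))
          * ((X : Polynomial (Polynomial ℤ))^(a+b) * C (X^(k-a+b))) := by
    intro a _ b _
    rw [map_pow]
    push_cast
    ring
  rw [Finset.sum_congr rfl (fun a ha => Finset.sum_congr rfl (e a ha))]
  simp only [finset_sum_coeff, coeff_mono]
  exact crunch m k i j


/-- Product expansion of binary Krawtchouk polynomials:
`P_i(x) P_j(x) = ∑_{k=0}^n C(n-k, (i+j-k)/2) C(k, (i-j+k)/2) P_k(x)`,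
where binomial coefficients with fractional or negative lower index are zero. -/
theorem kraw_product_expansion (n i j x : ℕ) (hi : i ≤ n) (hj : j ≤ n)
    (hx : x ≤ n) :
    kraw n i x * kraw n j x
      = ∑ k ∈ Finset.range (n + 1),
          halfChoose (n - k) ((i : ℤ) + j - k) * halfChoose k ((i : ℤ) - j + k) *
            kraw n k x := by
  have L := congrArg (fun p => (p.coeff i).coeff j) (key n x hx)
  rw [coeffLHS (fun t => kraw n t x) n i j hi hj] at L
  rw [L]
  simp only [finset_sum_coeff, coeff_intCast_mul, coeffRHS]
  apply Finset.sum_congr rfl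
  intro k _
  push_cast
  ring
end

section
/- Let n ≥ d ≥ 1 and define A(x) = 2^(n-d+1) * ∏_{r=d}^{n} (1 - x/r). Then A expands in the Krawtchouk basis as A(x) = ∑_{i=0}^{n} α_i P_i(x) evaluated at integers 0 ≤ x ≤ n, where α_i = C(n - i, d - 1) / C(n, n - d + 1). -/
open Finset

lemma trinom (M t b : ℕ) : M.choose t * (M - t).choose b = M.choose b * (M - b).choose t := by
  rcases le_or_gt (t + b) M with h | h
  · have h1 := Nat.choose_mul (n := M) (Nat.le_add_right t b)
    have h2 := Nat.choose_mul (n := M) (Nat.le_add_left b t)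
    rw [Nat.add_sub_cancel_left] at h1
    rw [Nat.add_sub_cancel] at h2
    rw [← h1, ← h2, Nat.add_comm t b, Nat.choose_symm_add]
  · have z1 : M.choose t * (M - t).choose b = 0 := by
      rcases le_or_gt t M with ht | ht
      · rw [Nat.choose_eq_zero_of_lt (by omega : M - t < b), Nat.mul_zero]
      · rw [Nat.choose_eq_zero_of_lt ht, Nat.zero_mul]
    have z2 : M.choose b * (M - b).choose t = 0 := by
      rcases le_or_gt b M with hb | hb
      · rw [Nat.choose_eq_zero_of_lt (by omega : M - b < t), Nat.mul_zero]
      · rw [Nat.choose_eq_zero_of_lt hb, Nat.zero_mul]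
    rw [z1, z2]

lemma sum_trinom (M b : ℕ) :
    ∑ t ∈ range (M + 1), M.choose t * (M - t).choose b = M.choose b * 2 ^ (M - b) := by
  simp_rw [trinom]
  rw [← Finset.mul_sum]
  congr 1
  rw [← Nat.sum_range_choose (M - b)]
  apply (Finset.sum_subset (by
    apply Finset.range_subset_range.2; omega) ?_).symm
  intro t _ ht
  exact Nat.choose_eq_zero_of_lt (by simp [Finset.mem_range] at ht ⊢; omega)

lemma vand2 (M P K : ℕ) :
    ∑ t ∈ range (P + M + 1), M.choose t * (P + M - t).choose K
      = ∑ s ∈ range (K + 1), M.choose s * 2 ^ (M - s) * P.choose (K - s) := by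
  have step1 : ∑ t ∈ range (P + M + 1), M.choose t * (P + M - t).choose K
      = ∑ t ∈ range (M + 1), M.choose t * (P + M - t).choose K := by
    apply (Finset.sum_subset (Finset.range_subset_range.2 (by omega)) ?_).symm
    intro t _ ht
    rw [Nat.choose_eq_zero_of_lt (by simp [Finset.mem_range] at ht ⊢; omega), Nat.zero_mul]
  rw [step1]
  have step2 : ∀ t ∈ range (M + 1), M.choose t * (P + M - t).choose K
      = ∑ a ∈ range (K + 1), P.choose a * (M.choose t * (M - t).choose (K - a)) := by
    intro t ht
    simp only [Finset.mem_range] at ht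
    have : P + M - t = P + (M - t) := by omega
    rw [this, Nat.add_choose_eq, Finset.Nat.sum_antidiagonal_eq_sum_range_succ_mk,
      Finset.mul_sum]
    apply Finset.sum_congr rfl
    intro a _
    ring
  rw [Finset.sum_congr rfl step2, Finset.sum_comm]
  have step3 : ∀ a ∈ range (K + 1),
      ∑ t ∈ range (M + 1), P.choose a * (M.choose t * (M - t).choose (K - a))
        = P.choose a * (M.choose (K - a) * 2 ^ (M - (K - a))) := by
    intro a _
    rw [← Finset.mul_sum, sum_trinom]
  rw [Finset.sum_congr rfl step3, ← Finset.sum_range_reflect]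
  apply Finset.sum_congr rfl
  intro s hs
  simp only [Finset.mem_range] at hs
  have h1 : K + 1 - 1 - s = K - s := by omega
  have h2 : K - (K - s) = s := by omega
  rw [h1, h2]
  ring

lemma alt_delta (x K : ℕ) :
    ∑ j ∈ range (x + 1), (-1 : ℤ) ^ j * (x.choose j : ℤ) * ((x - j).choose K : ℤ)
      = if K = x then 1 else 0 := by
  rcases le_or_gt K x with hK | hK
  · have step : ∀ j ∈ range (x + 1), (-1 : ℤ) ^ j * (x.choose j : ℤ) * ((x - j).choose K : ℤ)
        = (x.choose K : ℤ) * ((-1 : ℤ) ^ j * ((x - K).choose j : ℤ)) := by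
      intro j _
      have := trinom x j K
      have h2 : ((x.choose j : ℤ) * ((x - j).choose K : ℤ))
          = (x.choose K : ℤ) * ((x - K).choose j : ℤ) := by exact_mod_cast this
      calc (-1 : ℤ) ^ j * (x.choose j : ℤ) * ((x - j).choose K : ℤ)
          = (-1 : ℤ) ^ j * ((x.choose j : ℤ) * ((x - j).choose K : ℤ)) := by ring
        _ = (-1 : ℤ) ^ j * ((x.choose K : ℤ) * ((x - K).choose j : ℤ)) := by rw [h2]
        _ = (x.choose K : ℤ) * ((-1 : ℤ) ^ j * ((x - K).choose j : ℤ)) := by ring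
    rw [Finset.sum_congr rfl step, ← Finset.mul_sum]
    have trunc : ∑ j ∈ range (x + 1), (-1 : ℤ) ^ j * ((x - K).choose j : ℤ)
        = ∑ j ∈ range (x - K + 1), (-1 : ℤ) ^ j * ((x - K).choose j : ℤ) := by
      apply (Finset.sum_subset (Finset.range_subset_range.2 (by omega)) ?_).symm
      intro j _ hj
      rw [Nat.choose_eq_zero_of_lt (by simp [Finset.mem_range] at hj ⊢; omega)]
      simp
    rw [trunc, Int.alternating_sum_range_choose]
    rcases eq_or_lt_of_le hK with h | h
    · simp [h, Nat.sub_self]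
    · rw [if_neg (by omega), if_neg (by omega), Int.mul_zero]
  · rw [if_neg (by omega)]
    apply Finset.sum_eq_zero
    intro j _
    rw [Nat.choose_eq_zero_of_lt (by omega : x - j < K)]
    simp

lemma key_sum (n d x : ℕ) (hd1 : 1 ≤ d) (hdn : d ≤ n) (hx : x ≤ n) :
    ∑ i ∈ range (n + 1), ((n - i).choose (d - 1) : ℤ) * kraw n i x
      = 2 ^ (n - d + 1) * ((n - x).choose (n - d + 1) : ℤ) := by
  -- expand kraw and push the coefficient inside
  have e1 : ∑ i ∈ range (n + 1), ((n - i).choose (d - 1) : ℤ) * kraw n i x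
      = ∑ i ∈ range (n + 1), ∑ j ∈ range (i + 1),
          (-1 : ℤ) ^ j * (x.choose j : ℤ) *
            (((n - x).choose (i - j) : ℤ) * ((n - i).choose (d - 1) : ℤ)) := by
    apply Finset.sum_congr rfl
    intro i _
    rw [kraw, Finset.mul_sum]
    apply Finset.sum_congr rfl
    intro j _
    ring
  rw [e1]
  -- swap the two sums
  rw [Finset.sum_comm' (t' := range (n + 1)) (s' := fun j => Finset.Icc j n)
    (by intro i j; simp [Finset.mem_range, Finset.mem_Icc]; omega)]
  -- reindex inner sum
  have e2 : ∀ j ∈ range (n + 1),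
      ∑ i ∈ Finset.Icc j n, (-1 : ℤ) ^ j * (x.choose j : ℤ) *
          (((n - x).choose (i - j) : ℤ) * ((n - i).choose (d - 1) : ℤ))
        = (-1 : ℤ) ^ j * (x.choose j : ℤ) *
          ((∑ t ∈ range (n - j + 1), (n - x).choose t * (n - (j + t)).choose (d - 1) : ℕ) : ℤ) := by
    intro j hj
    simp only [Finset.mem_range] at hj
    rw [← Finset.Ico_add_one_right_eq_Icc, Finset.sum_Ico_eq_sum_range]
    have hrange : n + 1 - j = n - j + 1 := by omega
    rw [hrange]
    push_cast
    rw [Finset.mul_sum]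
    apply Finset.sum_congr rfl
    intro t _
    rw [Nat.add_sub_cancel_left]
  rw [Finset.sum_congr rfl e2]
  -- drop terms with j > x
  rw [← Finset.sum_subset (Finset.range_subset_range.2 (by omega : x + 1 ≤ n + 1))
    (by
      intro j _ hj
      rw [Nat.choose_eq_zero_of_lt (by simp [Finset.mem_range] at hj ⊢; omega)]
      simp)]
  -- apply vand2 to the inner natural sum
  have e3 : ∀ j ∈ range (x + 1),
      (-1 : ℤ) ^ j * (x.choose j : ℤ) *
          ((∑ t ∈ range (n - j + 1), (n - x).choose t * (n - (j + t)).choose (d - 1) : ℕ) : ℤ)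
        = ∑ s ∈ range (d - 1 + 1),
            ((n - x).choose s : ℤ) * 2 ^ (n - x - s) *
              ((-1 : ℤ) ^ j * (x.choose j : ℤ) * ((x - j).choose (d - 1 - s) : ℤ)) := by
    intro j hj
    simp only [Finset.mem_range] at hj
    have hjx : j ≤ x := by omega
    have hnat : ∑ t ∈ range (n - j + 1), (n - x).choose t * (n - (j + t)).choose (d - 1)
        = ∑ s ∈ range (d - 1 + 1), (n - x).choose s * 2 ^ (n - x - s) * (x - j).choose (d - 1 - s) := by
      have h1 : n - j + 1 = (x - j) + (n - x) + 1 := by omega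
      have h2 : ∀ t, n - (j + t) = (x - j) + (n - x) - t := by intro t; omega
      rw [h1, ← vand2 (n - x) (x - j) (d - 1)]
      apply Finset.sum_congr rfl
      intro t _
      rw [h2]
    rw [hnat]
    push_cast
    rw [Finset.mul_sum]
    apply Finset.sum_congr rfl
    intro s _
    ring
  rw [Finset.sum_congr rfl e3, Finset.sum_comm]
  -- inner alternating sum collapses to a delta
  have e4 : ∀ s ∈ range (d - 1 + 1),
      ∑ j ∈ range (x + 1),
          ((n - x).choose s : ℤ) * 2 ^ (n - x - s) *
            ((-1 : ℤ) ^ j * (x.choose j : ℤ) * ((x - j).choose (d - 1 - s) : ℤ))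
        = ((n - x).choose s : ℤ) * 2 ^ (n - x - s) *
            (if d - 1 - s = x then 1 else 0) := by
    intro s _
    rw [← Finset.mul_sum, alt_delta]
  rw [Finset.sum_congr rfl e4]
  rcases le_or_gt x (d - 1) with hxd | hxd
  · -- only s = d - 1 - x survives
    have e5 : ∀ s ∈ range (d - 1 + 1),
        ((n - x).choose s : ℤ) * 2 ^ (n - x - s) * (if d - 1 - s = x then 1 else 0)
          = if s = d - 1 - x then ((n - x).choose s : ℤ) * 2 ^ (n - x - s) else 0 := by
      intro s hs
      simp only [Finset.mem_range] at hs
      by_cases h : d - 1 - s = x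
      · rw [if_pos h, if_pos (by omega), Int.mul_one]
      · rw [if_neg h, if_neg (by omega), Int.mul_zero]
    rw [Finset.sum_congr rfl e5, Finset.sum_ite_eq' (range (d - 1 + 1)) (d - 1 - x)]
    rw [if_pos (by simp only [Finset.mem_range]; omega)]
    have hc : (n - x).choose (d - 1 - x) = (n - x).choose (n - d + 1) := by
      rw [← Nat.choose_symm (by omega : d - 1 - x ≤ n - x)]
      congr 1
      omega
    have hp : n - x - (d - 1 - x) = n - d + 1 := by omega
    rw [hc, hp]
    ring
  · -- x > d - 1 : everything vanishes
    have e5 : ∀ s ∈ range (d - 1 + 1),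
        ((n - x).choose s : ℤ) * 2 ^ (n - x - s) * (if d - 1 - s = x then 1 else 0) = 0 := by
      intro s _
      rw [if_neg (by omega), Int.mul_zero]
    rw [Finset.sum_congr rfl e5, Finset.sum_const_zero,
      Nat.choose_eq_zero_of_lt (by omega : n - x < n - d + 1)]
    simp

lemma prodA (d x : ℕ) (hd1 : 1 ≤ d) (n : ℕ) (hdn : d ≤ n) :
    x ≤ n →
      (n.choose (n - d + 1) : ℚ) * ∏ r ∈ Icc d n, (1 - (x : ℚ) / r)
        = ((n - x).choose (n - d + 1) : ℚ) := by
  induction n, hdn using Nat.le_induction with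
  | base =>
    intro hxd
    have hd0 : (d : ℚ) ≠ 0 := by positivity
    rw [Nat.sub_self, Finset.Icc_self, Finset.prod_singleton, Nat.choose_one_right,
      Nat.choose_one_right]
    rw [Nat.cast_sub hxd]
    field_simp
  | succ n hn ih =>
    intro hx
    have hm : n + 1 - d + 1 = (n - d + 1) + 1 := by omega
    rw [hm, Finset.prod_Icc_succ_top (by omega : d ≤ n + 1)]
    rcases eq_or_lt_of_le hx with hxe | hxlt
    · have : (1 - (x : ℚ) / (n + 1 : ℕ)) = 0 := by
        rw [hxe]
        have : ((n : ℚ) + 1) ≠ 0 := by positivity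
        push_cast
        field_simp
        norm_num
      rw [this, hxe, Nat.sub_self,
        Nat.choose_eq_zero_of_lt (show 0 < n - d + 1 + 1 by omega)]
      simp
    · have hxn : x ≤ n := by omega
      have key := ih hxn
      have hx2 : n + 1 - x = (n - x) + 1 := by omega
      rw [hx2]
      have hc1 := Nat.add_one_mul_choose_eq n (n - d + 1)
      have hc2 := Nat.add_one_mul_choose_eq (n - x) (n - d + 1)
      have hc1' : ((n : ℚ) + 1) * (n.choose (n - d + 1) : ℚ)
          = ((n + 1).choose (n - d + 1 + 1) : ℚ) * (((n - d + 1 : ℕ) : ℚ) + 1) := by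
        exact_mod_cast hc1
      have hc2' : (((n - x : ℕ) : ℚ) + 1) * ((n - x).choose (n - d + 1) : ℚ)
          = ((n - x + 1).choose (n - d + 1 + 1) : ℚ) * (((n - d + 1 : ℕ) : ℚ) + 1) := by
        exact_mod_cast hc2
      have hxc : ((n - x : ℕ) : ℚ) = (n : ℚ) - (x : ℚ) := by
        rw [Nat.cast_sub hxn]
      have hne1 : ((n : ℚ) + 1) ≠ 0 := by positivity
      have hne2 : (((n - d + 1 : ℕ) : ℚ) + 1) ≠ 0 := by positivity
      have hnn : ((n + 1 : ℕ) : ℚ) = (n : ℚ) + 1 := by push_cast; ring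
      rw [hnn]
      field_simp
      refine mul_left_cancel₀ hne2 ?_
      linear_combination (-((∏ r ∈ Icc d n, (1 - (x:ℚ)/r)) * ((n:ℚ) + 1 - x))) * hc1'
        + (((n:ℚ) + 1) * ((n:ℚ) + 1 - x)) * key
        - (((n:ℚ) + 1) * (((n - x).choose (n - d + 1) : ℕ) : ℚ)) * hxc
        + ((n:ℚ) + 1) * hc2'

/-- Expansion of `A(x) = 2^(n-d+1) ∏_{r=d}^n (1 - x/r)` in the Krawtchouk
basis, with coefficients `α_i = C(n-i, d-1) / C(n, n-d+1)`. -/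
theorem krawtchouk_expansion_of_A (n d : ℕ) (hd1 : 1 ≤ d) (hdn : d ≤ n)
    (x : ℕ) (hx : x ≤ n) :
    (2 : ℚ) ^ (n - d + 1) * ∏ r ∈ Finset.Icc d n, (1 - (x : ℚ) / (r : ℚ))
      = ∑ i ∈ Finset.range (n + 1),
          ((Nat.choose (n - i) (d - 1) : ℚ) / (Nat.choose n (n - d + 1) : ℚ)) *
            (kraw n i x : ℚ) := by
  have hCn : (n.choose (n - d + 1) : ℚ) ≠ 0 := by
    exact_mod_cast (Nat.choose_pos (by omega : n - d + 1 ≤ n)).ne'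
  have K : ∑ i ∈ Finset.range (n + 1), ((n - i).choose (d - 1) : ℚ) * (kraw n i x : ℚ)
      = 2 ^ (n - d + 1) * ((n - x).choose (n - d + 1) : ℚ) := by
    exact_mod_cast congrArg (fun z : ℤ => (z : ℚ)) (key_sum n d x hd1 hdn hx)
  have P := prodA d x hd1 n hdn hx
  simp_rw [div_mul_eq_mul_div, ← Finset.sum_div]
  rw [K, eq_div_iff hCn]
  linear_combination (2 ^ (n - d + 1) : ℚ) * P
end

section
/- Abstract Singleton bound: Under the hypotheses of the key linear-programming inequality, with α_{i,j} = (C(n-i, d_z - 1)/C(n, n - d_z + 1)) * (C(n-j, d_x - 1)/C(n, n - d_x + 1)) and f(x,y) = 2^(2n - d_x - d_z + 2) * ∏_{r = d_x}^{n}(1 - x/r) * ∏_{s = d_z}^{n}(1 - y/s), and assuming d_x ≤ n/2 + 1 and d_z ≤ n/2 + 1, one concludes K ≤ 2^(n - d_x - d_z + 2). In particular, if K = 2^k then n ≥ k + d_x + d_z - 2. -/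
lemma tri (N : ℕ) (f : ℕ → ℕ → ℤ) :
    ∑ i ∈ Finset.range N, ∑ j ∈ Finset.range (i+1), f i j
      = ∑ j ∈ Finset.range N, ∑ i ∈ Finset.Ico j N, f i j := by
  induction N with
  | zero => simp
  | succ N ih =>
    rw [Finset.sum_range_succ, ih,
      Finset.sum_range_succ (fun j => ∑ i ∈ Finset.Ico j (N+1), f i j)]
    have h1 : ∀ j ∈ Finset.range N,
        ∑ i ∈ Finset.Ico j (N+1), f i j = (∑ i ∈ Finset.Ico j N, f i j) + f N j := by
      intro j hj
      exact Finset.sum_Ico_succ_top (Finset.mem_range.1 hj).le _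
    rw [Finset.sum_congr rfl h1, Finset.sum_add_distrib, Finset.sum_range_succ (f N)]
    have h2 : ∑ i ∈ Finset.Ico N (N+1), f i N = f N N := by simp
    rw [h2]; ring

lemma choose_trinomial (m t u : ℕ) :
    m.choose t * (m - t).choose u = m.choose u * (m - u).choose t := by
  have key : ∀ a b : ℕ, a + b ≤ m →
      m.choose a * (m-a).choose b * (Nat.factorial a * (Nat.factorial b * Nat.factorial (m - a - b))) = Nat.factorial m := by
    intro a b hab
    have hb : b ≤ m - a := by omega
    have h1 := Nat.choose_mul_factorial_mul_factorial hb
    have h2 := Nat.choose_mul_factorial_mul_factorial (show a ≤ m by omega)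
    calc m.choose a * (m-a).choose b * (Nat.factorial a * (Nat.factorial b * Nat.factorial (m - a - b)))
        = m.choose a * Nat.factorial a * ((m-a).choose b * Nat.factorial b * Nat.factorial ((m-a) - b)) := by ring_nf
      _ = m.choose a * Nat.factorial a * Nat.factorial (m-a) := by rw [h1]
      _ = Nat.factorial m := h2
  by_cases h : t + u ≤ m
  · have k1 := key t u h
    have k2 := key u t (by omega)
    have e : Nat.factorial u * (Nat.factorial t * Nat.factorial (m - u - t)) = Nat.factorial t * (Nat.factorial u * Nat.factorial (m - t - u)) := by
      rw [show m - u - t = m - t - u by omega]; ring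
    rw [e] at k2
    have hpos : 0 < Nat.factorial t * (Nat.factorial u * Nat.factorial (m - t - u)) :=
      Nat.mul_pos (Nat.factorial_pos _) (Nat.mul_pos (Nat.factorial_pos _) (Nat.factorial_pos _))
    exact Nat.eq_of_mul_eq_mul_right hpos (k1.trans k2.symm)
  · push_neg at h
    rcases le_or_gt t m with ht | ht
    · rcases le_or_gt u m with hu | hu
      · rw [Nat.choose_eq_zero_of_lt (show m - t < u by omega),
          Nat.choose_eq_zero_of_lt (show m - u < t by omega)]; ring
      · rw [Nat.choose_eq_zero_of_lt (show m - t < u by omega),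
          Nat.choose_eq_zero_of_lt hu]; ring
    · rw [Nat.choose_eq_zero_of_lt ht,
        Nat.choose_eq_zero_of_lt (show m - u < t by omega)]; ring

lemma sum_choose_le (M N : ℕ) (h : M ≤ N) :
    ∑ t ∈ Finset.range (N+1), (M.choose t : ℤ) = 2^M := by
  rw [← Finset.sum_subset (Finset.range_subset_range.2 (by omega : M+1 ≤ N+1))
      (fun t _ ht => by
        rw [Nat.choose_eq_zero_of_lt (by simp only [Finset.mem_range] at ht ⊢; omega)]
        simp)]
  exact_mod_cast Nat.sum_range_choose M

lemma choose_shift (m c b : ℕ) (h : c + b ≤ m) (s : ℕ) :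
    m.choose c * (m+s).choose b ≤ (m+s).choose (c+s) * m.choose b := by
  induction s with
  | zero => simp [mul_comm]
  | succ s ih =>
    have key1 : (m+s).choose b * (m+s+1) = (m+s+1).choose b * (m+s+1-b) :=
      Nat.choose_mul_succ_eq (m+s) b
    have key2 : (m+s+1) * (m+s).choose (c+s) = (m+s+1).choose (c+s+1) * (c+s+1) :=
      Nat.add_one_mul_choose_eq (m+s) (c+s)
    have hpos : 0 < m+s+1-b := by omega
    have H : m.choose c * (m+s+1).choose b * (m+s+1-b)
        ≤ (m+s+1).choose (c+s+1) * m.choose b * (m+s+1-b) := by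
      calc m.choose c * (m+s+1).choose b * (m+s+1-b)
          = m.choose c * ((m+s+1).choose b * (m+s+1-b)) := by ring
        _ = m.choose c * ((m+s).choose b * (m+s+1)) := by rw [← key1]
        _ = (m.choose c * (m+s).choose b) * (m+s+1) := by ring
        _ ≤ ((m+s).choose (c+s) * m.choose b) * (m+s+1) := Nat.mul_le_mul_right _ ih
        _ = ((m+s+1) * (m+s).choose (c+s)) * m.choose b := by ring
        _ = ((m+s+1).choose (c+s+1) * (c+s+1)) * m.choose b := by rw [key2]
        _ ≤ ((m+s+1).choose (c+s+1) * (m+s+1-b)) * m.choose b := by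
            apply Nat.mul_le_mul_right
            exact Nat.mul_le_mul_left _ (by omega)
        _ = (m+s+1).choose (c+s+1) * m.choose b * (m+s+1-b) := by ring
    exact Nat.le_of_mul_le_mul_right H hpos

lemma kraw_sum (n a s : ℕ) (ha : a ≤ n) (hs : s ≤ n) :
    ∑ i ∈ Finset.range (n+1), ((n-i).choose a : ℤ) * kraw n i s
      = 2^(n-a) * ((n-s).choose (n-a) : ℤ) := by
  have step1 : ∑ i ∈ Finset.range (n+1), ((n-i).choose a : ℤ) * kraw n i s
      = ∑ j ∈ Finset.range (n+1), ∑ i ∈ Finset.Ico j (n+1),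
          ((n-i).choose a : ℤ) * ((-1:ℤ)^j * (s.choose j : ℤ) * ((n-s).choose (i-j) : ℤ)) := by
    rw [← tri]
    refine Finset.sum_congr rfl fun i _ => ?_
    rw [kraw, Finset.mul_sum]
  rw [step1]
  rw [← Finset.sum_subset (Finset.range_subset_range.2 (by omega : s+1 ≤ n+1))
      (fun j _ hj => Finset.sum_eq_zero fun i _ => by
        rw [Nat.choose_eq_zero_of_lt (show s < j by simp only [Finset.mem_range] at hj; omega)]
        push_cast; ring)]
  have step3 : ∀ j ∈ Finset.range (s+1),
      ∑ i ∈ Finset.Ico j (n+1),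
          ((n-i).choose a : ℤ) * ((-1:ℤ)^j * (s.choose j : ℤ) * ((n-s).choose (i-j) : ℤ))
      = ∑ u ∈ Finset.range (a+1), ((-1:ℤ)^j * (s.choose j : ℤ) * ((s-j).choose (a-u) : ℤ)
          * ((n-s).choose u : ℤ)) * 2^(n-s-u) := by
    intro j hj
    have hjs : j ≤ s := by simp only [Finset.mem_range] at hj; omega
    rw [Finset.sum_Ico_eq_sum_range]
    simp only [Nat.add_sub_cancel_left, show n + 1 - j = (n - j) + 1 by omega]
    rw [← Finset.sum_subset (Finset.range_subset_range.2 (by omega : (n-s)+1 ≤ (n-j)+1))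
        (fun t _ ht => by
          rw [Nat.choose_eq_zero_of_lt
            (show n - s < t by simp only [Finset.mem_range] at ht; omega)]
          push_cast; ring)]
    have inner : ∀ t ∈ Finset.range (n-s+1),
        ((n-(j+t)).choose a : ℤ) * ((-1:ℤ)^j * (s.choose j : ℤ) * ((n-s).choose t : ℤ))
        = ∑ u ∈ Finset.range (a+1), ((-1:ℤ)^j * (s.choose j : ℤ) * ((s-j).choose (a-u) : ℤ))
            * (((n-s).choose t : ℤ) * ((n-s-t).choose u : ℤ)) := by
      intro t ht
      have htn : t ≤ n - s := by simp only [Finset.mem_range] at ht; omega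
      have e1 : n - (j+t) = (n-s-t) + (s-j) := by omega
      rw [e1, Nat.add_choose_eq,
        Finset.Nat.sum_antidiagonal_eq_sum_range_succ
          (fun u v => (n-s-t).choose u * (s-j).choose v)]
      push_cast
      rw [Finset.sum_mul]
      refine Finset.sum_congr rfl fun u _ => by ring
    rw [Finset.sum_congr rfl inner, Finset.sum_comm]
    refine Finset.sum_congr rfl fun u _ => ?_
    have tr : ∀ t : ℕ, ((n-s).choose t : ℤ) * ((n-s-t).choose u : ℤ)
        = ((n-s).choose u : ℤ) * ((n-s-u).choose t : ℤ) := fun t => by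
      exact_mod_cast congrArg (fun z : ℕ => (z : ℤ)) (choose_trinomial (n-s) t u)
    calc ∑ t ∈ Finset.range (n-s+1),
          ((-1:ℤ)^j * (s.choose j : ℤ) * ((s-j).choose (a-u) : ℤ))
            * (((n-s).choose t : ℤ) * ((n-s-t).choose u : ℤ))
        = ∑ t ∈ Finset.range (n-s+1),
          ((-1:ℤ)^j * (s.choose j : ℤ) * ((s-j).choose (a-u) : ℤ) * ((n-s).choose u : ℤ))
            * ((n-s-u).choose t : ℤ) := by
          refine Finset.sum_congr rfl fun t _ => ?_
          have := tr t
          linear_combination ((-1:ℤ)^j * (s.choose j : ℤ) * ((s-j).choose (a-u) : ℤ)) * this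
      _ = ((-1:ℤ)^j * (s.choose j : ℤ) * ((s-j).choose (a-u) : ℤ) * ((n-s).choose u : ℤ))
            * ∑ t ∈ Finset.range ((n-s)+1), ((n-s-u).choose t : ℤ) := by
          rw [Finset.mul_sum]
      _ = _ := by rw [sum_choose_le (n-s-u) (n-s) (by omega)]
  rw [Finset.sum_congr rfl step3, Finset.sum_comm]
  have step5 : ∀ u ∈ Finset.range (a+1),
      ∑ j ∈ Finset.range (s+1), ((-1:ℤ)^j * (s.choose j : ℤ) * ((s-j).choose (a-u) : ℤ)
          * ((n-s).choose u : ℤ)) * 2^(n-s-u)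
      = ((s.choose (a-u) : ℤ) * (if s - (a-u) = 0 then 1 else 0))
          * (((n-s).choose u : ℤ) * 2^(n-s-u)) := by
    intro u _
    have tr2 : ∀ j : ℕ, (s.choose j : ℤ) * ((s-j).choose (a-u) : ℤ)
        = (s.choose (a-u) : ℤ) * ((s-(a-u)).choose j : ℤ) := fun j => by
      exact_mod_cast congrArg (fun z : ℕ => (z : ℤ)) (choose_trinomial s j (a-u))
    calc ∑ j ∈ Finset.range (s+1), ((-1:ℤ)^j * (s.choose j : ℤ) * ((s-j).choose (a-u) : ℤ)
          * ((n-s).choose u : ℤ)) * 2^(n-s-u)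
        = ∑ j ∈ Finset.range (s+1), ((s.choose (a-u) : ℤ) * (((n-s).choose u : ℤ) * 2^(n-s-u)))
            * ((-1:ℤ)^j * ((s-(a-u)).choose j : ℤ)) := by
          refine Finset.sum_congr rfl fun j _ => ?_
          have := tr2 j
          linear_combination ((-1:ℤ)^j * ((n-s).choose u : ℤ) * 2^(n-s-u)) * this
      _ = ((s.choose (a-u) : ℤ) * (((n-s).choose u : ℤ) * 2^(n-s-u)))
            * ∑ j ∈ Finset.range (s+1), (-1:ℤ)^j * ((s-(a-u)).choose j : ℤ) := by
          rw [Finset.mul_sum]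
      _ = _ := by
          rw [← Finset.sum_subset (Finset.range_subset_range.2 (by omega : (s-(a-u))+1 ≤ s+1))
            (fun j _ hjn => by
              rw [Nat.choose_eq_zero_of_lt
                (show s - (a-u) < j by simp only [Finset.mem_range] at hjn; omega)]
              push_cast; ring),
            Int.alternating_sum_range_choose]
          ring
  rw [Finset.sum_congr rfl step5]
  rcases le_or_gt s a with hsa | hsa
  · rw [Finset.sum_eq_single (a-s)]
    · rw [show a - (a-s) = s by omega, Nat.choose_self,
        show (n-s) - (a-s) = n - a by omega,
        ← Nat.choose_symm (show a - s ≤ n - s by omega),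
        show (n-s) - (a-s) = n - a by omega]
      simp
      ring
    · intro u hu hne
      simp only [Finset.mem_range] at hu
      rcases lt_or_gt_of_ne hne with h1 | h1
      · rw [Nat.choose_eq_zero_of_lt (show s < a - u by omega)]
        push_cast; ring
      · rw [if_neg (show ¬ (s - (a-u) = 0) by omega)]
        ring
    · intro h
      exact absurd (Finset.mem_range.2 (by omega)) h
  · rw [Finset.sum_eq_zero (fun u hu => by
        simp only [Finset.mem_range] at hu
        rw [if_neg (show ¬ (s - (a-u) = 0) by omega)]
        ring),
      Nat.choose_eq_zero_of_lt (show n - s < n - a by omega)]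
    simp

lemma prod_ineq (n dx dz r s : ℕ) (hdx : 1 ≤ dx) (hdz : 1 ≤ dz)
    (hsum : dx + dz ≤ n + 2) (hr : r < dx) (hs : s < dz) :
    (n-s).choose (n-(dz-1)) * (n-r).choose (n-(dx-1))
      ≤ (n-r).choose (dz-1) * (n-s).choose (dx-1) := by
  have h1 : (n-s).choose (n-(dz-1)) = (n-s).choose (dz-1-s) := by
    rw [show n-(dz-1) = (n-s) - (dz-1-s) by omega]
    exact Nat.choose_symm (by omega)
  have h2 : (n-r).choose (n-(dx-1)) = (n-r).choose (dx-1-r) := by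
    rw [show n-(dx-1) = (n-r) - (dx-1-r) by omega]
    exact Nat.choose_symm (by omega)
  rw [h1, h2]
  have I1 := choose_shift (n-s) (dz-1-s) (dx-1) (by omega) s
  have I2 := choose_shift (n-r) (dx-1-r) (dz-1) (by omega) r
  rw [show n - s + s = n by omega, show dz-1-s+s = dz-1 by omega] at I1
  rw [show n - r + r = n by omega, show dx-1-r+r = dx-1 by omega] at I2
  have I := Nat.mul_le_mul I1 I2
  have hpos : 0 < n.choose (dx-1) * n.choose (dz-1) :=
    Nat.mul_pos (Nat.choose_pos (by omega)) (Nat.choose_pos (by omega))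
  have I' : ((n-s).choose (dz-1-s) * (n-r).choose (dx-1-r))
        * (n.choose (dx-1) * n.choose (dz-1))
      ≤ ((n-r).choose (dz-1) * (n-s).choose (dx-1))
        * (n.choose (dx-1) * n.choose (dz-1)) := by
    calc ((n-s).choose (dz-1-s) * (n-r).choose (dx-1-r))
          * (n.choose (dx-1) * n.choose (dz-1))
        = ((n-s).choose (dz-1-s) * n.choose (dx-1))
          * ((n-r).choose (dx-1-r) * n.choose (dz-1)) := by ring
      _ ≤ (n.choose (dz-1) * (n-s).choose (dx-1))
          * (n.choose (dx-1) * (n-r).choose (dz-1)) := I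
      _ = ((n-r).choose (dz-1) * (n-s).choose (dx-1))
          * (n.choose (dx-1) * n.choose (dz-1)) := by ring
  exact Nat.le_of_mul_le_mul_right I' hpos

lemma swap_mul (t u : Finset ℕ) (f g : ℕ → ℝ) (h : ℕ → ℕ → ℝ) :
    ∑ x ∈ t, f x * ∑ y ∈ u, g y * h x y = ∑ y ∈ u, g y * ∑ x ∈ t, f x * h x y := by
  simp_rw [Finset.mul_sum]
  rw [Finset.sum_comm]
  exact Finset.sum_congr rfl fun y _ => Finset.sum_congr rfl fun x _ => by ring

lemma lp_transform (n : ℕ) (c0 : ℝ) (C Cp : ℕ → ℕ → ℝ) (a b Ah Bh : ℕ → ℝ)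
    (hd : ∀ i ∈ Finset.range (n+1), ∀ j ∈ Finset.range (n+1),
      C i j = c0 * ∑ r ∈ Finset.range (n+1), ∑ s ∈ Finset.range (n+1),
        (kraw n i s : ℝ) * (kraw n j r : ℝ) * Cp r s)
    (hA : ∀ s ∈ Finset.range (n+1),
      ∑ i ∈ Finset.range (n+1), a i * (kraw n i s : ℝ) = Ah s)
    (hB : ∀ r ∈ Finset.range (n+1),
      ∑ j ∈ Finset.range (n+1), b j * (kraw n j r : ℝ) = Bh r) :
    ∑ i ∈ Finset.range (n+1), a i * ∑ j ∈ Finset.range (n+1), b j * C i j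
      = c0 * ∑ s ∈ Finset.range (n+1),
          (∑ r ∈ Finset.range (n+1), Cp r s * Bh r) * Ah s := by
  have h1 : ∀ i ∈ Finset.range (n+1), ∑ j ∈ Finset.range (n+1), b j * C i j
      = c0 * ∑ s ∈ Finset.range (n+1),
          (kraw n i s : ℝ) * ∑ r ∈ Finset.range (n+1), Cp r s * Bh r := by
    intro i hi
    calc ∑ j ∈ Finset.range (n+1), b j * C i j
        = ∑ j ∈ Finset.range (n+1), b j * (c0 * ∑ s ∈ Finset.range (n+1),
            (kraw n i s : ℝ) * ∑ r ∈ Finset.range (n+1), (kraw n j r : ℝ) * Cp r s) := by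
          refine Finset.sum_congr rfl fun j hj => ?_
          rw [hd i hi j hj]
          congr 1
          congr 1
          rw [Finset.sum_comm]
          refine Finset.sum_congr rfl fun sx _ => ?_
          rw [Finset.mul_sum]
          exact Finset.sum_congr rfl fun r _ => by ring
      _ = c0 * ∑ j ∈ Finset.range (n+1), b j * ∑ s ∈ Finset.range (n+1),
            (kraw n i s : ℝ) * ∑ r ∈ Finset.range (n+1), (kraw n j r : ℝ) * Cp r s := by
          rw [Finset.mul_sum]
          exact Finset.sum_congr rfl fun j _ => by ring
      _ = c0 * ∑ s ∈ Finset.range (n+1), (kraw n i s : ℝ) * ∑ j ∈ Finset.range (n+1),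
            b j * ∑ r ∈ Finset.range (n+1), (kraw n j r : ℝ) * Cp r s := by
          rw [swap_mul]
      _ = c0 * ∑ s ∈ Finset.range (n+1),
            (kraw n i s : ℝ) * ∑ r ∈ Finset.range (n+1), Cp r s * Bh r := by
          congr 1
          refine Finset.sum_congr rfl fun sx _ => ?_
          congr 1
          calc ∑ j ∈ Finset.range (n+1), b j * ∑ r ∈ Finset.range (n+1),
                (kraw n j r : ℝ) * Cp r sx
              = ∑ j ∈ Finset.range (n+1), b j * ∑ r ∈ Finset.range (n+1),
                Cp r sx * (kraw n j r : ℝ) := by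
                refine Finset.sum_congr rfl fun j _ => ?_
                congr 1
                exact Finset.sum_congr rfl fun r _ => by ring
            _ = ∑ r ∈ Finset.range (n+1), Cp r sx * ∑ j ∈ Finset.range (n+1),
                b j * (kraw n j r : ℝ) :=
                swap_mul _ _ b (fun r => Cp r sx) (fun j r => (kraw n j r : ℝ))
            _ = ∑ r ∈ Finset.range (n+1), Cp r sx * Bh r :=
                Finset.sum_congr rfl fun r hr => by rw [hB r hr]
  calc ∑ i ∈ Finset.range (n+1), a i * ∑ j ∈ Finset.range (n+1), b j * C i j
      = ∑ i ∈ Finset.range (n+1), a i * (c0 * ∑ s ∈ Finset.range (n+1),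
          (kraw n i s : ℝ) * ∑ r ∈ Finset.range (n+1), Cp r s * Bh r) :=
        Finset.sum_congr rfl fun i hi => by rw [h1 i hi]
    _ = c0 * ∑ i ∈ Finset.range (n+1), a i * ∑ s ∈ Finset.range (n+1),
          (∑ r ∈ Finset.range (n+1), Cp r s * Bh r) * (kraw n i s : ℝ) := by
        rw [Finset.mul_sum]
        refine Finset.sum_congr rfl fun i _ => ?_
        rw [show a i * (c0 * ∑ s ∈ Finset.range (n+1),
          (kraw n i s : ℝ) * ∑ r ∈ Finset.range (n+1), Cp r s * Bh r)
          = c0 * (a i * ∑ s ∈ Finset.range (n+1),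
          (kraw n i s : ℝ) * ∑ r ∈ Finset.range (n+1), Cp r s * Bh r) by ring]
        congr 2
        exact Finset.sum_congr rfl fun sx _ => by ring
    _ = c0 * ∑ s ∈ Finset.range (n+1), (∑ r ∈ Finset.range (n+1), Cp r s * Bh r)
          * ∑ i ∈ Finset.range (n+1), a i * (kraw n i s : ℝ) := by
        rw [swap_mul]
    _ = c0 * ∑ s ∈ Finset.range (n+1),
          (∑ r ∈ Finset.range (n+1), Cp r s * Bh r) * Ah s := by
        congr 1
        exact Finset.sum_congr rfl fun sx hs => by rw [hA sx hs]


/-- Abstract quantum Singleton bound: under hypotheses (a)–(d) of the key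
linear-programming inequality, and `d_x, d_z ≤ n/2 + 1`, one has
`K ≤ 2^(n - d_x - d_z + 2)`; in particular if `K = 2^k` then
`n ≥ k + d_x + d_z - 2`. -/
theorem quantum_singleton_bound (n dx dz : ℕ) (hdx : 1 ≤ dx) (hdz : 1 ≤ dz)
    (hdx2 : 2 * dx ≤ n + 2) (hdz2 : 2 * dz ≤ n + 2)
    (K : ℝ) (hK : 0 < K)
    (C Cp : ℕ → ℕ → ℝ)
    (ha : ∀ r s, r ≤ n → s ≤ n → 0 ≤ C r s ∧ C r s ≤ Cp r s)
    (hb : C 0 0 = 1 ∧ Cp 0 0 = 1)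
    (hc : ∀ r s, r < dx → s < dz → C r s = Cp r s)
    (hd : ∀ i j, i ≤ n → j ≤ n →
      C i j = (1 / (2 ^ n * K)) *
        ∑ r ∈ Finset.range (n + 1), ∑ s ∈ Finset.range (n + 1),
          (kraw n i s : ℝ) * (kraw n j r : ℝ) * Cp r s) :
    K ≤ (2 : ℝ) ^ ((n : ℤ) - dx - dz + 2) ∧
      (∀ k : ℕ, K = 2 ^ k → (k : ℤ) + dx + dz - 2 ≤ (n : ℤ)) := by
  have hdxn : dx - 1 ≤ n := by omega
  have hdzn : dz - 1 ≤ n := by omega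
  have hdxn1 : dx ≤ n + 1 := by omega
  have hdzn1 : dz ≤ n + 1 := by omega
  have hCp0 : ∀ r s, r ≤ n → s ≤ n → 0 ≤ Cp r s :=
    fun r s hr hs => le_trans (ha r s hr hs).1 (ha r s hr hs).2
  -- the two Krawtchouk column sums
  have hA : ∀ s ∈ Finset.range (n+1),
      ∑ i ∈ Finset.range (n+1), ((n-i).choose (dz-1) : ℝ) * (kraw n i s : ℝ)
        = (2:ℝ)^(n-(dz-1)) * ((n-s).choose (n-(dz-1)) : ℝ) := by
    intro s hsN
    have hs : s ≤ n := by simp only [Finset.mem_range] at hsN; omega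
    have h := kraw_sum n (dz-1) s hdzn hs
    have h2 : ((∑ i ∈ Finset.range (n+1), ((n-i).choose (dz-1) : ℤ) * kraw n i s : ℤ) : ℝ)
        = ((2^(n-(dz-1)) * ((n-s).choose (n-(dz-1)) : ℤ) : ℤ) : ℝ) := by exact_mod_cast h
    push_cast at h2
    exact h2
  have hB : ∀ r ∈ Finset.range (n+1),
      ∑ j ∈ Finset.range (n+1), ((n-j).choose (dx-1) : ℝ) * (kraw n j r : ℝ)
        = (2:ℝ)^(n-(dx-1)) * ((n-r).choose (n-(dx-1)) : ℝ) := by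
    intro r hrN
    have hr : r ≤ n := by simp only [Finset.mem_range] at hrN; omega
    have h := kraw_sum n (dx-1) r hdxn hr
    have h2 : ((∑ j ∈ Finset.range (n+1), ((n-j).choose (dx-1) : ℤ) * kraw n j r : ℤ) : ℝ)
        = ((2^(n-(dx-1)) * ((n-r).choose (n-(dx-1)) : ℤ) : ℤ) : ℝ) := by exact_mod_cast h
    push_cast at h2
    exact h2
  have key := lp_transform n (1 / (2^n * K)) C Cp
    (fun i => ((n-i).choose (dz-1) : ℝ)) (fun j => ((n-j).choose (dx-1) : ℝ))
    (fun s => (2:ℝ)^(n-(dz-1)) * ((n-s).choose (n-(dz-1)) : ℝ))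
    (fun r => (2:ℝ)^(n-(dx-1)) * ((n-r).choose (n-(dx-1)) : ℝ))
    (fun i hi j hj => hd i j (by simp only [Finset.mem_range] at hi; omega)
      (by simp only [Finset.mem_range] at hj; omega)) hA hB
  -- lower bound
  have hWle : (∑ i ∈ Finset.range dx, ((n-i).choose (dz-1) : ℝ)
        * ∑ j ∈ Finset.range dz, ((n-j).choose (dx-1) : ℝ) * Cp i j)
      ≤ ∑ i ∈ Finset.range (n+1), ((n-i).choose (dz-1) : ℝ)
        * ∑ j ∈ Finset.range (n+1), ((n-j).choose (dx-1) : ℝ) * C i j := by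
    have step1 : (∑ i ∈ Finset.range dx, ((n-i).choose (dz-1) : ℝ)
          * ∑ j ∈ Finset.range dz, ((n-j).choose (dx-1) : ℝ) * Cp i j)
        = ∑ i ∈ Finset.range dx, ((n-i).choose (dz-1) : ℝ)
          * ∑ j ∈ Finset.range dz, ((n-j).choose (dx-1) : ℝ) * C i j := by
      refine Finset.sum_congr rfl fun i hi => ?_
      congr 1
      refine Finset.sum_congr rfl fun j hj => ?_
      rw [hc i j (Finset.mem_range.1 hi) (Finset.mem_range.1 hj)]
    rw [step1]
    have step2 : ∀ i, i ≤ n → ∑ j ∈ Finset.range dz, ((n-j).choose (dx-1) : ℝ) * C i j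
        ≤ ∑ j ∈ Finset.range (n+1), ((n-j).choose (dx-1) : ℝ) * C i j := by
      intro i hi
      refine Finset.sum_le_sum_of_subset_of_nonneg
        (Finset.range_subset_range.2 (by omega)) (fun j hj _ => ?_)
      have hjn : j ≤ n := by simp only [Finset.mem_range] at hj; omega
      exact mul_nonneg (by positivity) (ha i j hi hjn).1
    calc ∑ i ∈ Finset.range dx, ((n-i).choose (dz-1) : ℝ)
          * ∑ j ∈ Finset.range dz, ((n-j).choose (dx-1) : ℝ) * C i j
        ≤ ∑ i ∈ Finset.range dx, ((n-i).choose (dz-1) : ℝ)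
          * ∑ j ∈ Finset.range (n+1), ((n-j).choose (dx-1) : ℝ) * C i j := by
          refine Finset.sum_le_sum fun i hi => ?_
          exact mul_le_mul_of_nonneg_left
            (step2 i (by simp only [Finset.mem_range] at hi; omega)) (by positivity)
      _ ≤ ∑ i ∈ Finset.range (n+1), ((n-i).choose (dz-1) : ℝ)
          * ∑ j ∈ Finset.range (n+1), ((n-j).choose (dx-1) : ℝ) * C i j := by
          refine Finset.sum_le_sum_of_subset_of_nonneg
            (Finset.range_subset_range.2 (by omega)) (fun i hi _ => ?_)
          have hin : i ≤ n := by simp only [Finset.mem_range] at hi; omega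
          refine mul_nonneg (by positivity) (Finset.sum_nonneg fun j hj => ?_)
          have hjn : j ≤ n := by simp only [Finset.mem_range] at hj; omega
          exact mul_nonneg (by positivity) (ha i j hin hjn).1
  -- upper bound on the transformed sum
  have hT : (∑ s ∈ Finset.range (n+1),
        (∑ r ∈ Finset.range (n+1), Cp r s * ((2:ℝ)^(n-(dx-1)) * ((n-r).choose (n-(dx-1)) : ℝ)))
        * ((2:ℝ)^(n-(dz-1)) * ((n-s).choose (n-(dz-1)) : ℝ)))
      ≤ (2:ℝ)^(n-(dz-1)) * 2^(n-(dx-1)) * (∑ i ∈ Finset.range dx, ((n-i).choose (dz-1) : ℝ)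
        * ∑ j ∈ Finset.range dz, ((n-j).choose (dx-1) : ℝ) * Cp i j) := by
    have shrink_s : (∑ s ∈ Finset.range (n+1),
          (∑ r ∈ Finset.range (n+1), Cp r s * ((2:ℝ)^(n-(dx-1)) * ((n-r).choose (n-(dx-1)) : ℝ)))
          * ((2:ℝ)^(n-(dz-1)) * ((n-s).choose (n-(dz-1)) : ℝ)))
        = ∑ s ∈ Finset.range dz,
          (∑ r ∈ Finset.range dx, Cp r s * ((2:ℝ)^(n-(dx-1)) * ((n-r).choose (n-(dx-1)) : ℝ)))
          * ((2:ℝ)^(n-(dz-1)) * ((n-s).choose (n-(dz-1)) : ℝ)) := by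
      rw [← Finset.sum_subset (Finset.range_subset_range.2 hdzn1) (fun s hsN hs => by
        rw [Nat.choose_eq_zero_of_lt (show n - s < n-(dz-1) by
          simp only [Finset.mem_range] at hsN hs; omega)]
        push_cast; ring)]
      refine Finset.sum_congr rfl fun s _ => ?_
      congr 1
      rw [← Finset.sum_subset (Finset.range_subset_range.2 hdxn1) (fun r hrN hr => by
        rw [Nat.choose_eq_zero_of_lt (show n - r < n-(dx-1) by
          simp only [Finset.mem_range] at hrN hr; omega)]
        push_cast; ring)]
    rw [shrink_s]
    have pointwise : ∀ s ∈ Finset.range dz,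
        (∑ r ∈ Finset.range dx, Cp r s * ((2:ℝ)^(n-(dx-1)) * ((n-r).choose (n-(dx-1)) : ℝ)))
          * ((2:ℝ)^(n-(dz-1)) * ((n-s).choose (n-(dz-1)) : ℝ))
        ≤ ∑ r ∈ Finset.range dx, (2:ℝ)^(n-(dz-1)) * 2^(n-(dx-1))
            * (Cp r s * (((n-r).choose (dz-1) : ℝ) * ((n-s).choose (dx-1) : ℝ))) := by
      intro s hs
      have hsdz : s < dz := Finset.mem_range.1 hs
      rw [Finset.sum_mul]
      refine Finset.sum_le_sum fun r hr => ?_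
      have hrdx : r < dx := Finset.mem_range.1 hr
      have hCpn : 0 ≤ Cp r s := hCp0 r s (by omega) (by omega)
      have hpi := prod_ineq n dx dz r s hdx hdz (by omega) hrdx hsdz
      have hpiR : ((n-s).choose (n-(dz-1)) : ℝ) * ((n-r).choose (n-(dx-1)) : ℝ)
          ≤ ((n-r).choose (dz-1) : ℝ) * ((n-s).choose (dx-1) : ℝ) := by
        exact_mod_cast hpi
      calc Cp r s * ((2:ℝ)^(n-(dx-1)) * ((n-r).choose (n-(dx-1)) : ℝ))
            * ((2:ℝ)^(n-(dz-1)) * ((n-s).choose (n-(dz-1)) : ℝ))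
          = ((2:ℝ)^(n-(dz-1)) * 2^(n-(dx-1)) * Cp r s)
            * (((n-s).choose (n-(dz-1)) : ℝ) * ((n-r).choose (n-(dx-1)) : ℝ)) := by ring
        _ ≤ ((2:ℝ)^(n-(dz-1)) * 2^(n-(dx-1)) * Cp r s)
            * (((n-r).choose (dz-1) : ℝ) * ((n-s).choose (dx-1) : ℝ)) := by
            exact mul_le_mul_of_nonneg_left hpiR (by positivity)
        _ = (2:ℝ)^(n-(dz-1)) * 2^(n-(dx-1))
            * (Cp r s * (((n-r).choose (dz-1) : ℝ) * ((n-s).choose (dx-1) : ℝ))) := by ring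
    calc (∑ s ∈ Finset.range dz,
          (∑ r ∈ Finset.range dx, Cp r s * ((2:ℝ)^(n-(dx-1)) * ((n-r).choose (n-(dx-1)) : ℝ)))
          * ((2:ℝ)^(n-(dz-1)) * ((n-s).choose (n-(dz-1)) : ℝ)))
        ≤ ∑ s ∈ Finset.range dz, ∑ r ∈ Finset.range dx, (2:ℝ)^(n-(dz-1)) * 2^(n-(dx-1))
            * (Cp r s * (((n-r).choose (dz-1) : ℝ) * ((n-s).choose (dx-1) : ℝ))) :=
          Finset.sum_le_sum pointwise
      _ = (2:ℝ)^(n-(dz-1)) * 2^(n-(dx-1)) * (∑ i ∈ Finset.range dx,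
            ((n-i).choose (dz-1) : ℝ) * ∑ j ∈ Finset.range dz, ((n-j).choose (dx-1) : ℝ) * Cp i j) := by
          rw [Finset.sum_comm]
          rw [Finset.mul_sum]
          refine Finset.sum_congr rfl fun i _ => ?_
          rw [Finset.mul_sum, Finset.mul_sum]
          refine Finset.sum_congr rfl fun j _ => by ring
  -- positivity of the corner sum
  have hW0 : (0:ℝ) < ∑ i ∈ Finset.range dx, ((n-i).choose (dz-1) : ℝ)
      * ∑ j ∈ Finset.range dz, ((n-j).choose (dx-1) : ℝ) * Cp i j := by
    have hinner0 : ((n-(0:ℕ)).choose (dx-1) : ℝ) * Cp 0 0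
        ≤ ∑ j ∈ Finset.range dz, ((n-j).choose (dx-1) : ℝ) * Cp 0 j := by
      refine Finset.single_le_sum (f := fun j => ((n-j).choose (dx-1) : ℝ) * Cp 0 j)
        (fun j hj => ?_) (Finset.mem_range.2 hdz)
      have hjn : j ≤ n := by simp only [Finset.mem_range] at hj; omega
      exact mul_nonneg (by positivity) (hCp0 0 j (by omega) hjn)
    have hterm0 : (0:ℝ) < ((n-(0:ℕ)).choose (dz-1) : ℝ)
        * ∑ j ∈ Finset.range dz, ((n-j).choose (dx-1) : ℝ) * Cp 0 j := by
      have hc1 : (0:ℝ) < ((n-(0:ℕ)).choose (dz-1) : ℝ) := by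
        exact_mod_cast Nat.choose_pos (by omega : dz - 1 ≤ n - 0)
      have hc2 : (0:ℝ) < ((n-(0:ℕ)).choose (dx-1) : ℝ) := by
        exact_mod_cast Nat.choose_pos (by omega : dx - 1 ≤ n - 0)
      have : (0:ℝ) < ((n-(0:ℕ)).choose (dx-1) : ℝ) * Cp 0 0 := by
        rw [hb.2]; simpa using hc2
      exact mul_pos hc1 (lt_of_lt_of_le this hinner0)
    refine lt_of_lt_of_le hterm0 ?_
    refine Finset.single_le_sum
      (f := fun i => ((n-i).choose (dz-1) : ℝ) * ∑ j ∈ Finset.range dz, ((n-j).choose (dx-1) : ℝ) * Cp i j)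
      (fun i hi => ?_) (Finset.mem_range.2 hdx)
    have hin : i ≤ n := by simp only [Finset.mem_range] at hi; omega
    refine mul_nonneg (by positivity) (Finset.sum_nonneg fun j hj => ?_)
    have hjn : j ≤ n := by simp only [Finset.mem_range] at hj; omega
    exact mul_nonneg (by positivity) (hCp0 i j hin hjn)
  -- combine
  set W : ℝ := ∑ i ∈ Finset.range dx, ((n-i).choose (dz-1) : ℝ)
      * ∑ j ∈ Finset.range dz, ((n-j).choose (dx-1) : ℝ) * Cp i j with hWdef
  have chain : W ≤ (1/(2^n*K)) * ((2:ℝ)^(n-(dz-1)) * 2^(n-(dx-1)) * W) := by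
    calc W ≤ ∑ i ∈ Finset.range (n+1), ((n-i).choose (dz-1) : ℝ)
          * ∑ j ∈ Finset.range (n+1), ((n-j).choose (dx-1) : ℝ) * C i j := hWle
      _ = (1/(2^n*K)) * ∑ s ∈ Finset.range (n+1),
          (∑ r ∈ Finset.range (n+1), Cp r s * ((2:ℝ)^(n-(dx-1)) * ((n-r).choose (n-(dx-1)) : ℝ)))
          * ((2:ℝ)^(n-(dz-1)) * ((n-s).choose (n-(dz-1)) : ℝ)) := key
      _ ≤ (1/(2^n*K)) * ((2:ℝ)^(n-(dz-1)) * 2^(n-(dx-1)) * W) := by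
          exact mul_le_mul_of_nonneg_left hT (by positivity)
  have hPexp : (2:ℝ)^(n-(dz-1)) * 2^(n-(dx-1)) = 2^n * 2^(n+2-dx-dz) := by
    rw [← pow_add, ← pow_add]
    congr 1
    omega
  rw [hPexp] at chain
  have h2nK : (0:ℝ) < 2^n * K := by positivity
  have step : (2:ℝ)^n * K * W ≤ 2^n * 2^(n+2-dx-dz) * W := by
    have h := mul_le_mul_of_nonneg_left chain (le_of_lt h2nK)
    have hR : (2:ℝ)^n * K * ((1/(2^n*K)) * (2^n * 2^(n+2-dx-dz) * W))
        = 2^n * 2^(n+2-dx-dz) * W := by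
      field_simp
    calc (2:ℝ)^n * K * W ≤ (2:ℝ)^n * K * ((1/(2^n*K)) * (2^n * 2^(n+2-dx-dz) * W)) := h
      _ = 2^n * 2^(n+2-dx-dz) * W := hR
  have step2 : (2:ℝ)^n * K ≤ 2^n * 2^(n+2-dx-dz) := le_of_mul_le_mul_right step hW0
  have hfin : K ≤ (2:ℝ)^(n+2-dx-dz) :=
    le_of_mul_le_mul_left step2 (by positivity : (0:ℝ) < 2^n)
  constructor
  · rw [show ((n:ℤ) - dx - dz + 2) = ((n+2-dx-dz : ℕ) : ℤ) by omega, zpow_natCast]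
    exact hfin
  · intro k hk
    rw [hk] at hfin
    have hkm : k ≤ n+2-dx-dz := by
      by_contra hcon
      push_neg at hcon
      have := pow_lt_pow_right₀ (one_lt_two : (1:ℝ) < 2) hcon
      linarith
    omega
end

section
/- For Krawtchouk polynomials with parameter n and any natural numbers θ ≤ n/2 and y ≤ n, setting α_i = (P_θ(i))^2 for 0 ≤ i ≤ n, one has ∑_{i=0}^{n} α_i P_i(y) = 2^n * C(n - y, θ - y/2) * C(y, y/2), where binomial coefficients with fractional or negative lower index are zero (so the sum vanishes for odd y). -/
open Finset

section Aux

variable {n : ℕ}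

lemma aux_inter_union {Z U C : Finset (Fin n)} (hU : U ⊆ Z) (hC : C ⊆ Zᶜ) :
    (U ∪ C) ∩ Z = U := by
  ext i
  simp only [mem_inter, mem_union]
  constructor
  · rintro ⟨h1 | h1, h2⟩
    · exact h1
    · exact absurd h2 (by simpa using hC h1)
  · intro h; exact ⟨Or.inl h, hU h⟩

lemma aux_sdiff_union {Z U C : Finset (Fin n)} (hU : U ⊆ Z) (hC : C ⊆ Zᶜ) :
    (U ∪ C) \ Z = C := by
  ext i
  simp only [mem_sdiff, mem_union]
  constructor
  · rintro ⟨h1 | h1, h2⟩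
    · exact absurd (hU h1) h2
    · exact h1
  · intro h; exact ⟨Or.inr h, by simpa using hC h⟩

lemma sum_split (Z : Finset (Fin n)) (g : Finset (Fin n) → ℤ) :
    ∑ A ∈ (univ : Finset (Fin n)).powerset, g A
      = ∑ U ∈ Z.powerset, ∑ C ∈ Zᶜ.powerset, g (U ∪ C) := by
  rw [← Finset.sum_product']
  refine Finset.sum_nbij' (fun A => (A ∩ Z, A \ Z)) (fun p => p.1 ∪ p.2) ?_ ?_ ?_ ?_ ?_
  · intro A _
    simp only [Finset.mem_product, mem_powerset]
    refine ⟨inter_subset_right, fun i hi => ?_⟩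
    simp only [mem_sdiff] at hi
    simpa using hi.2
  · intro p _; simp
  · intro A _
    ext i
    simp only [mem_union, mem_inter, mem_sdiff]
    tauto
  · intro p hp
    simp only [Finset.mem_product, mem_powerset] at hp
    exact Prod.ext (aux_inter_union hp.1 hp.2) (aux_sdiff_union hp.1 hp.2)
  · intro A _
    congr 1
    ext i
    simp only [mem_union, mem_inter, mem_sdiff]
    tauto

lemma sum_ite_card (s : Finset (Fin n)) (m : ℕ) (x : ℤ) :
    ∑ C ∈ s.powerset, (if C.card = m then x else 0) = (s.card.choose m : ℤ) * x := by
  rw [← Finset.sum_filter, ← Finset.powersetCard_eq_filter, Finset.sum_const,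
    Finset.card_powersetCard, nsmul_eq_mul]

lemma kraw_eq_sum (k : ℕ) (Z : Finset (Fin n)) :
    kraw n k Z.card
      = ∑ A ∈ powersetCard k (univ : Finset (Fin n)), (-1 : ℤ) ^ (A ∩ Z).card := by
  classical
  set z := Z.card with hz
  have hzn : z ≤ n := by
    simpa using Finset.card_le_univ Z
  have hcompl : Zᶜ.card = n - z := by simp [Finset.card_compl, hz]
  set F : ℕ → ℤ := fun j => if j ≤ k then ((n - z).choose (k - j) : ℤ) * (-1) ^ j else 0 with hF
  have hrhs : ∑ A ∈ powersetCard k (univ : Finset (Fin n)), (-1 : ℤ) ^ (A ∩ Z).card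
      = ∑ j ∈ range (z + 1), (z.choose j : ℤ) * F j := by
    rw [powersetCard_eq_filter, sum_filter, sum_split Z]
    have step : ∀ U ∈ Z.powerset, ∑ C ∈ Zᶜ.powerset,
        (if (U ∪ C).card = k then (-1 : ℤ) ^ ((U ∪ C) ∩ Z).card else 0) = F U.card := by
      intro U hU
      rw [mem_powerset] at hU
      have hsum : ∀ C ∈ Zᶜ.powerset,
          (if (U ∪ C).card = k then (-1 : ℤ) ^ ((U ∪ C) ∩ Z).card else 0)
            = if C.card = k - U.card ∧ U.card ≤ k then (-1 : ℤ) ^ U.card else 0 := by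
        intro C hC
        rw [mem_powerset] at hC
        have hdisj : Disjoint U C := disjoint_compl_right.mono hU hC
        rw [aux_inter_union hU hC, Finset.card_union_of_disjoint hdisj]
        have : U.card + C.card = k ↔ C.card = k - U.card ∧ U.card ≤ k := by omega
        simp only [this]
      rw [sum_congr rfl hsum]
      by_cases h : U.card ≤ k
      · simp only [h, and_true]
        rw [sum_ite_card, hcompl, hF]
        simp [h]
      · simp [hF, h]
    rw [sum_congr rfl step, Finset.sum_powerset]
    refine sum_congr rfl fun j _ => ?_
    rw [Finset.sum_powersetCard, nsmul_eq_mul]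
  have hlhs : kraw n k z = ∑ j ∈ range (k + 1), (z.choose j : ℤ) * F j := by
    unfold kraw
    refine sum_congr rfl fun j hj => ?_
    rw [mem_range] at hj
    have hjk : j ≤ k := by omega
    rw [hF]
    simp only [hjk, if_true]
    ring
  rw [hrhs, hlhs]
  rcases le_total (k + 1) (z + 1) with h | h
  · refine Finset.sum_subset (Finset.range_subset_range.2 h) fun j _ hj => ?_
    rw [mem_range, not_lt] at hj
    have : ¬ j ≤ k := by omega
    simp [hF, this]
  · refine (Finset.sum_subset (Finset.range_subset_range.2 h) fun j _ hj => ?_).symm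
    rw [mem_range, not_lt] at hj
    have : z < j := by omega
    simp [Nat.choose_eq_zero_of_lt this]

lemma char_expand (A x : Finset (Fin n)) :
    (-1 : ℤ) ^ (A ∩ x).card = ∏ i ∈ x, (if i ∈ A then (-1 : ℤ) else 1) := by
  rw [Finset.prod_ite_mem, Finset.prod_const, Finset.inter_comm]

lemma ortho (A B Y : Finset (Fin n)) :
    ∑ x ∈ (univ : Finset (Fin n)).powerset,
        (-1 : ℤ) ^ (A ∩ x).card * ((-1 : ℤ) ^ (B ∩ x).card * (-1 : ℤ) ^ (Y ∩ x).card)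
      = if symmDiff A B = Y then 2 ^ n else 0 := by
  classical
  set f : Fin n → ℤ := fun i =>
    (if i ∈ A then (-1 : ℤ) else 1) *
      ((if i ∈ B then (-1 : ℤ) else 1) * (if i ∈ Y then (-1 : ℤ) else 1)) with hf
  have key : ∀ x : Finset (Fin n),
      (-1 : ℤ) ^ (A ∩ x).card * ((-1 : ℤ) ^ (B ∩ x).card * (-1 : ℤ) ^ (Y ∩ x).card)
        = ∏ i ∈ x, f i := by
    intro x
    rw [char_expand, char_expand, char_expand, hf]
    rw [← Finset.prod_mul_distrib, ← Finset.prod_mul_distrib]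
  have h2 : ∑ x ∈ (univ : Finset (Fin n)).powerset, ∏ i ∈ x, f i
      = ∏ i ∈ (univ : Finset (Fin n)), (f i + 1) := by
    rw [Finset.prod_add]
    exact (sum_congr rfl fun t _ => by rw [Finset.prod_const_one, mul_one]).symm
  rw [sum_congr rfl fun x _ => key x, h2]
  by_cases h : symmDiff A B = Y
  · rw [if_pos h]
    have hmem : ∀ i : Fin n, i ∈ Y ↔ (i ∈ A ∧ i ∉ B ∨ i ∈ B ∧ i ∉ A) := fun i => by
      rw [← h, Finset.mem_symmDiff]
    have : ∀ i ∈ (univ : Finset (Fin n)), f i + 1 = 2 := by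
      intro i _
      have hi := hmem i
      simp only [hf]
      split_ifs with h1 h2 h3 <;> norm_num <;> tauto
    rw [Finset.prod_congr rfl this, Finset.prod_const]
    simp
  · rw [if_neg h]
    have : ∃ i : Fin n, ¬ (i ∈ symmDiff A B ↔ i ∈ Y) := by
      by_contra hc
      push_neg at hc
      exact h (Finset.ext fun i => hc i)
    obtain ⟨i, hi⟩ := this
    refine Finset.prod_eq_zero (mem_univ i) ?_
    rw [Finset.mem_symmDiff] at hi
    simp only [hf]
    split_ifs with h1 h2 h3 <;> norm_num <;> tauto

lemma count_pairs (θ y : ℕ) (Y : Finset (Fin n)) (hY : Y.card = y) :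
    ∑ A ∈ powersetCard θ (univ : Finset (Fin n)),
        (if (symmDiff A Y).card = θ then (1 : ℤ) else 0)
      = if 2 ∣ y ∧ y / 2 ≤ θ then
          ((n - y).choose (θ - y / 2) : ℤ) * (y.choose (y / 2) : ℤ)
        else 0 := by
  classical
  have hYc : Yᶜ.card = n - y := by simp [Finset.card_compl, hY]
  rw [powersetCard_eq_filter, sum_filter, sum_split Y]
  have key : ∀ U ∈ Y.powerset, ∀ C ∈ Yᶜ.powerset,
      (if (U ∪ C).card = θ then
          (if (symmDiff (U ∪ C) Y).card = θ then (1 : ℤ) else 0) else 0)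
        = if (2 ∣ y ∧ y / 2 ≤ θ) ∧ U.card = y / 2 ∧ C.card = θ - y / 2 then 1 else 0 := by
    intro U hU C hC
    rw [mem_powerset] at hU hC
    have hdisj : Disjoint U C := disjoint_compl_right.mono hU hC
    have hcardUC : (U ∪ C).card = U.card + C.card := Finset.card_union_of_disjoint hdisj
    have hsymm : symmDiff (U ∪ C) Y = C ∪ (Y \ U) := by
      have hUY : ∀ i, i ∈ U → i ∈ Y := fun i hi => hU hi
      have hCY : ∀ i, i ∈ C → i ∉ Y := fun i hi => by simpa using hC hi
      ext i
      have h1 := hUY i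
      have h2 := hCY i
      rw [Finset.mem_symmDiff]
      simp only [mem_union, mem_sdiff]
      tauto
    have hdisj2 : Disjoint C (Y \ U) :=
      disjoint_compl_left.mono hC sdiff_subset
    have hcards : (symmDiff (U ∪ C) Y).card = C.card + (y - U.card) := by
      rw [hsymm, Finset.card_union_of_disjoint hdisj2, Finset.card_sdiff_of_subset hU, hY]
    have hUy : U.card ≤ y := hY ▸ Finset.card_le_card hU
    rw [hcardUC, hcards]
    split_ifs <;> omega
  rw [sum_congr rfl fun U hU => sum_congr rfl fun C hC => key U hU C hC]
  by_cases hcase : 2 ∣ y ∧ y / 2 ≤ θ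
  · rw [if_pos hcase]
    simp only [hcase, true_and]
    have factor : ∀ U C : Finset (Fin n),
        (if U.card = y / 2 ∧ C.card = θ - y / 2 then (1 : ℤ) else 0)
          = (if U.card = y / 2 then (1 : ℤ) else 0) *
              (if C.card = θ - y / 2 then (1 : ℤ) else 0) := by
      intro U C
      by_cases h1 : U.card = y / 2 <;> by_cases h2 : C.card = θ - y / 2 <;> simp [h1, h2]
    rw [sum_congr rfl fun U _ => sum_congr rfl fun C _ => factor U C]
    rw [← Finset.sum_mul_sum]
    rw [sum_ite_card, sum_ite_card, hY, hYc]
    ring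
  · rw [if_neg hcase]
    simp [hcase]

end Aux

/-- With `α_i = (P_θ(i))²`, one has
`∑_{i=0}^n α_i P_i(y) = 2^n C(n-y, θ - y/2) C(y, y/2)`, where binomial
coefficients with fractional or negative lower index vanish (so the right-hand
side is `0` for odd `y`, and also when `y/2 > θ`). -/
theorem kraw_square_sum (n θ y : ℕ) (hθ : 2 * θ ≤ n) (hy : y ≤ n) :
    ∑ i ∈ Finset.range (n + 1), (kraw n θ i) ^ 2 * kraw n i y
      = 2 ^ n *
          (if 2 ∣ y ∧ y / 2 ≤ θ then
            (Nat.choose (n - y) (θ - y / 2) : ℤ) * (Nat.choose y (y / 2) : ℤ)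
          else 0) := by
  classical
  have hcard : (univ : Finset (Fin n)).card = n := by simp
  obtain ⟨Y, -, hY⟩ : ∃ Y ⊆ (univ : Finset (Fin n)), Y.card = y :=
    Finset.exists_subset_card_eq (by simpa [hcard] using hy)
  set P := powersetCard θ (univ : Finset (Fin n)) with hP
  calc
    ∑ i ∈ Finset.range (n + 1), (kraw n θ i) ^ 2 * kraw n i y
        = ∑ i ∈ Finset.range (n + 1), ∑ x ∈ powersetCard i (univ : Finset (Fin n)),
            (kraw n θ x.card) ^ 2 * (-1 : ℤ) ^ (x ∩ Y).card := by
          refine sum_congr rfl fun i _ => ?_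
          rw [← hY, kraw_eq_sum, mul_sum]
          refine sum_congr rfl fun x hx => ?_
          rw [(mem_powersetCard.mp hx).2]
    _ = ∑ x ∈ (univ : Finset (Fin n)).powerset,
            (kraw n θ x.card) ^ 2 * (-1 : ℤ) ^ (x ∩ Y).card := by
          rw [Finset.sum_powerset, hcard]
    _ = ∑ x ∈ (univ : Finset (Fin n)).powerset, ∑ A ∈ P, ∑ B ∈ P,
            (-1 : ℤ) ^ (A ∩ x).card * ((-1 : ℤ) ^ (B ∩ x).card * (-1 : ℤ) ^ (Y ∩ x).card) := by
          refine sum_congr rfl fun x _ => ?_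
          rw [kraw_eq_sum θ x, sq, Finset.sum_mul_sum, sum_mul]
          refine sum_congr rfl fun A _ => ?_
          rw [sum_mul]
          refine sum_congr rfl fun B _ => ?_
          rw [Finset.inter_comm Y x]
          ring
    _ = ∑ A ∈ P, ∑ B ∈ P, ∑ x ∈ (univ : Finset (Fin n)).powerset,
            (-1 : ℤ) ^ (A ∩ x).card * ((-1 : ℤ) ^ (B ∩ x).card * (-1 : ℤ) ^ (Y ∩ x).card) := by
          rw [Finset.sum_comm]
          exact sum_congr rfl fun A _ => Finset.sum_comm
    _ = ∑ A ∈ P, ∑ B ∈ P, (if symmDiff A B = Y then (2 : ℤ) ^ n else 0) := by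
          exact sum_congr rfl fun A _ => sum_congr rfl fun B _ => ortho A B Y
    _ = ∑ A ∈ P, (if (symmDiff A Y).card = θ then (2 : ℤ) ^ n else 0) := by
          refine sum_congr rfl fun A _ => ?_
          have hiff : ∀ B : Finset (Fin n), symmDiff A B = Y ↔ B = symmDiff A Y := by
            intro B
            constructor
            · intro h; rw [← h, symmDiff_symmDiff_cancel_left]
            · intro h; rw [h, symmDiff_symmDiff_cancel_left]
          rw [sum_congr rfl fun B _ => if_congr (hiff B) rfl rfl, Finset.sum_ite_eq']
          exact if_congr Finset.mem_powersetCard_univ rfl rfl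
    _ = 2 ^ n * ∑ A ∈ P, (if (symmDiff A Y).card = θ then (1 : ℤ) else 0) := by
          rw [mul_sum]
          refine sum_congr rfl fun A _ => ?_
          split_ifs <;> ring
    _ = 2 ^ n *
          (if 2 ∣ y ∧ y / 2 ≤ θ then
            (Nat.choose (n - y) (θ - y / 2) : ℤ) * (Nat.choose y (y / 2) : ℤ)
          else 0) := by
          rw [hP, count_pairs θ y Y hY]
end

section
/- If C(X,Y,Z,W) and C⊥(X,Y,Z,W) are polynomials satisfying the quaternary MacWilliams identity C(X,Y,Z,W) = (1/K) C⊥(Z+W, Z−W, (X+Y)/2, (X−Y)/2), with coefficient expansions C = ∑_{i,j} C_{i,j} X^{n−i} Y^i Z^{n−j} W^j and C⊥ = ∑_{r,s} C⊥_{r,s} X^{n−r} Y^r Z^{n−s} W^s, then the coefficients are related by C_{i,j} = (1/(2^n K)) ∑_{r,s=0}^{n} P_i(s) P_j(r) C⊥_{r,s}, where P_k is the binary Krawtchouk polynomial with parameter n. -/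
open Polynomial Finset

lemma coeff_one_sub_X_pow (r k : ℕ) :
    ((1 - X : ℝ[X]) ^ r).coeff k = (-1 : ℝ) ^ k * r.choose k := by
  have h : (1 - X : ℝ[X]) = -(X + C (-1)) := by
    simp [map_neg]; ring
  have h2 : ((-1 : ℝ[X]) ^ r = C ((-1:ℝ)^r)) := by simp
  rw [h, neg_pow, h2, coeff_C_mul, coeff_X_add_C_pow]
  rcases le_or_gt k r with hk | hk
  · obtain ⟨m, rfl⟩ := Nat.exists_eq_add_of_le hk
    have : k + m - k = m := by omega
    rw [this, pow_add]
    ring_nf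
    simp [pow_mul, neg_one_sq]
    rw [show ((-1:ℝ)^m)^2 = ((-1)^2)^m by rw [← pow_mul, ← pow_mul, Nat.mul_comm]]
    simp
  · simp [Nat.choose_eq_zero_of_lt hk]

lemma gen_kraw (n r : ℕ) (hr : r ≤ n) (u : ℝ) :
    (1 - u) ^ r * (1 + u) ^ (n - r) =
      ∑ i ∈ Finset.range (n + 1), (kraw n i r : ℝ) * u ^ i := by
  have hdeg : ((1 - X : ℝ[X]) ^ r * (1 + X) ^ (n - r)).natDegree < n + 1 := by
    apply Nat.lt_succ_of_le
    calc ((1 - X : ℝ[X]) ^ r * (1 + X) ^ (n - r)).natDegree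
        ≤ ((1 - X : ℝ[X]) ^ r).natDegree + ((1 + X : ℝ[X]) ^ (n - r)).natDegree :=
          natDegree_mul_le
      _ ≤ r * (1 - X : ℝ[X]).natDegree + (n - r) * (1 + X : ℝ[X]).natDegree := by
          gcongr <;> exact natDegree_pow_le
      _ ≤ r * 1 + (n - r) * 1 := by
          gcongr
          · exact le_trans (natDegree_sub_le _ _) (by simp)
          · exact le_trans (natDegree_add_le _ _) (by simp)
      _ ≤ n := by omega
  have hev := eval_eq_sum_range' hdeg u
  have heval : ((1 - X : ℝ[X]) ^ r * (1 + X) ^ (n - r)).eval u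
      = (1 - u) ^ r * (1 + u) ^ (n - r) := by simp
  rw [heval] at hev
  rw [hev]
  refine Finset.sum_congr rfl fun i _ => ?_
  congr 1
  rw [coeff_mul, Finset.Nat.sum_antidiagonal_eq_sum_range_succ
    (f := fun a b => ((1 - X : ℝ[X]) ^ r).coeff a * ((1 + X : ℝ[X]) ^ (n-r)).coeff b)]
  simp only [coeff_one_sub_X_pow, coeff_one_add_X_pow, kraw]
  push_cast
  refine Finset.sum_congr rfl fun j _ => ?_
  ring

lemma ext1 (m : ℕ) (f g : ℕ → ℝ)
    (h : ∀ y : ℝ, ∑ i ∈ Finset.range m, f i * y ^ i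
        = ∑ i ∈ Finset.range m, g i * y ^ i) :
    ∀ i, i < m → f i = g i := by
  intro i hi
  have hpq : (∑ k ∈ Finset.range m, C (f k) * X ^ k : ℝ[X]) =
      ∑ k ∈ Finset.range m, C (g k) * X ^ k := by
    apply Polynomial.funext
    intro y
    simp only [Polynomial.eval_finset_sum, Polynomial.eval_mul, Polynomial.eval_C,
      Polynomial.eval_pow, Polynomial.eval_X]
    exact h y
  have h2 := congrArg (fun p => Polynomial.coeff p i) hpq
  simpa [Polynomial.finset_sum_coeff, Polynomial.coeff_C_mul, Polynomial.coeff_X_pow,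
    Finset.sum_ite_eq', hi] using h2

lemma ext2 (m : ℕ) (a b : ℕ → ℕ → ℝ)
    (h : ∀ y w : ℝ, ∑ i ∈ Finset.range m, ∑ j ∈ Finset.range m, a i j * y ^ i * w ^ j
        = ∑ i ∈ Finset.range m, ∑ j ∈ Finset.range m, b i j * y ^ i * w ^ j) :
    ∀ i j, i < m → j < m → a i j = b i j := by
  intro i j hi hj
  have h1 : ∀ w : ℝ, (∑ k ∈ Finset.range m, a i k * w ^ k)
      = ∑ k ∈ Finset.range m, b i k * w ^ k := by
    intro w
    refine ext1 m (fun i => ∑ k ∈ Finset.range m, a i k * w ^ k)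
      (fun i => ∑ k ∈ Finset.range m, b i k * w ^ k) (fun y => ?_) i hi
    have := h y w
    simp only [Finset.sum_mul]
    calc ∑ x ∈ Finset.range m, ∑ k ∈ Finset.range m, a x k * w ^ k * y ^ x
        = ∑ x ∈ Finset.range m, ∑ k ∈ Finset.range m, a x k * y ^ x * w ^ k := by
          refine Finset.sum_congr rfl fun x _ => Finset.sum_congr rfl fun k _ => by ring
      _ = ∑ x ∈ Finset.range m, ∑ k ∈ Finset.range m, b x k * y ^ x * w ^ k := this
      _ = ∑ x ∈ Finset.range m, ∑ k ∈ Finset.range m, b x k * w ^ k * y ^ x := by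
          refine Finset.sum_congr rfl fun x _ => Finset.sum_congr rfl fun k _ => by ring
  exact ext1 m (fun k => a i k) (fun k => b i k) h1 j hj

/-- If the double weight enumerators satisfy the quaternary MacWilliams
identity `C(X,Y,Z,W) = (1/K) C⊥(Z+W, Z-W, (X+Y)/2, (X-Y)/2)`, then the
coefficients satisfy `C_{i,j} = (1/(2^n K)) ∑_{r,s} P_i(s) P_j(r) C⊥_{r,s}`. -/
theorem coefficient_macwilliams (n : ℕ) (K : ℝ) (hK : 0 < K)
    (c cp : ℕ → ℕ → ℝ)
    (hmac : ∀ X Y Z W : ℝ,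
      (∑ i ∈ Finset.range (n + 1), ∑ j ∈ Finset.range (n + 1),
        c i j * X ^ (n - i) * Y ^ i * Z ^ (n - j) * W ^ j)
      = (1 / K) *
        ∑ r ∈ Finset.range (n + 1), ∑ s ∈ Finset.range (n + 1),
          cp r s * (Z + W) ^ (n - r) * (Z - W) ^ r *
            ((X + Y) / 2) ^ (n - s) * ((X - Y) / 2) ^ s) :
    ∀ i j, i ≤ n → j ≤ n →
      c i j = (1 / (2 ^ n * K)) *
        ∑ r ∈ Finset.range (n + 1), ∑ s ∈ Finset.range (n + 1),
          (kraw n i s : ℝ) * (kraw n j r : ℝ) * cp r s := by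
  intro i j hi hj
  refine ext2 (n + 1) c
    (fun i j => (1 / (2 ^ n * K)) *
      ∑ r ∈ Finset.range (n + 1), ∑ s ∈ Finset.range (n + 1),
        (kraw n i s : ℝ) * (kraw n j r : ℝ) * cp r s)
    (fun y w => ?_) i j (by omega) (by omega)
  have h0 := hmac 1 y 1 w
  simp only [one_pow, mul_one, one_mul] at h0
  have lhs_eq : (∑ i ∈ Finset.range (n + 1), ∑ j ∈ Finset.range (n + 1),
      c i j * y ^ i * w ^ j) =
      (1 / K) * ∑ r ∈ Finset.range (n + 1), ∑ s ∈ Finset.range (n + 1),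
        cp r s * (1 + w) ^ (n - r) * (1 - w) ^ r *
          ((1 + y) / 2) ^ (n - s) * ((1 - y) / 2) ^ s := h0
  rw [lhs_eq]
  have step1 : ∀ r ∈ Finset.range (n + 1), ∀ s ∈ Finset.range (n + 1),
      cp r s * (1 + w) ^ (n - r) * (1 - w) ^ r *
        ((1 + y) / 2) ^ (n - s) * ((1 - y) / 2) ^ s
      = ∑ a ∈ Finset.range (n + 1), ∑ b ∈ Finset.range (n + 1),
          (1 / 2 ^ n) * cp r s *
            ((kraw n a s : ℝ) * y ^ a * ((kraw n b r : ℝ) * w ^ b)) := by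
    intro r hr s hs
    rw [Finset.mem_range] at hr hs
    have hr' : r ≤ n := by omega
    have hs' : s ≤ n := by omega
    have e2 : (2:ℝ) ^ (n - s) * 2 ^ s = 2 ^ n := by
      rw [← pow_add]; congr 1; omega
    have e1 : ((1 + y) / 2) ^ (n - s) * ((1 - y) / 2) ^ s
        = (1 / 2 ^ n) * ((1 - y) ^ s * (1 + y) ^ (n - s)) := by
      rw [div_pow, div_pow, div_mul_div_comm, e2]; ring
    have g1 := gen_kraw n s hs' y
    have g2 := gen_kraw n r hr' w
    calc cp r s * (1 + w) ^ (n - r) * (1 - w) ^ r *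
          ((1 + y) / 2) ^ (n - s) * ((1 - y) / 2) ^ s
        = cp r s * ((1 - w) ^ r * (1 + w) ^ (n - r)) *
            (((1 + y) / 2) ^ (n - s) * ((1 - y) / 2) ^ s) := by ring
      _ = (1 / 2 ^ n) * cp r s *
            (((1 - y) ^ s * (1 + y) ^ (n - s)) * ((1 - w) ^ r * (1 + w) ^ (n - r))) := by
            rw [e1]; ring
      _ = (1 / 2 ^ n) * cp r s *
            ((∑ a ∈ Finset.range (n + 1), (kraw n a s : ℝ) * y ^ a) *
             (∑ b ∈ Finset.range (n + 1), (kraw n b r : ℝ) * w ^ b)) := by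
            rw [g1, g2]
      _ = ∑ a ∈ Finset.range (n + 1), ∑ b ∈ Finset.range (n + 1),
            (1 / 2 ^ n) * cp r s *
              ((kraw n a s : ℝ) * y ^ a * ((kraw n b r : ℝ) * w ^ b)) := by
            rw [Finset.sum_mul_sum, Finset.mul_sum]
            refine Finset.sum_congr rfl fun a _ => ?_
            rw [Finset.mul_sum]
  rw [Finset.sum_congr rfl (fun r hr => Finset.sum_congr rfl (fun s hs => step1 r hr s hs))]
  -- now reorder sums
  rw [show (∑ r ∈ Finset.range (n + 1), ∑ s ∈ Finset.range (n + 1),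
      ∑ a ∈ Finset.range (n + 1), ∑ b ∈ Finset.range (n + 1),
        (1 / 2 ^ n) * cp r s *
          ((kraw n a s : ℝ) * y ^ a * ((kraw n b r : ℝ) * w ^ b)))
    = ∑ a ∈ Finset.range (n + 1), ∑ b ∈ Finset.range (n + 1),
        ∑ r ∈ Finset.range (n + 1), ∑ s ∈ Finset.range (n + 1),
        (1 / 2 ^ n) * cp r s *
          ((kraw n a s : ℝ) * y ^ a * ((kraw n b r : ℝ) * w ^ b)) from ?_]
  · simp only [Finset.mul_sum, Finset.sum_mul]
    refine Finset.sum_congr rfl fun a _ => Finset.sum_congr rfl fun b _ =>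
      Finset.sum_congr rfl fun r _ => Finset.sum_congr rfl fun s _ => ?_
    field_simp
  · set F : ℕ → ℕ → ℕ → ℕ → ℝ := fun r s a b =>
      (1 / 2 ^ n) * cp r s * ((kraw n a s : ℝ) * y ^ a * ((kraw n b r : ℝ) * w ^ b)) with hF
    show ∑ r ∈ Finset.range (n+1), ∑ s ∈ Finset.range (n+1), ∑ a ∈ Finset.range (n+1),
        ∑ b ∈ Finset.range (n+1), F r s a b
      = ∑ a ∈ Finset.range (n+1), ∑ b ∈ Finset.range (n+1), ∑ r ∈ Finset.range (n+1),
        ∑ s ∈ Finset.range (n+1), F r s a b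
    calc ∑ r ∈ Finset.range (n+1), ∑ s ∈ Finset.range (n+1), ∑ a ∈ Finset.range (n+1),
            ∑ b ∈ Finset.range (n+1), F r s a b
        = ∑ r ∈ Finset.range (n+1), ∑ a ∈ Finset.range (n+1), ∑ s ∈ Finset.range (n+1),
            ∑ b ∈ Finset.range (n+1), F r s a b :=
          Finset.sum_congr rfl fun r _ => Finset.sum_comm
      _ = ∑ a ∈ Finset.range (n+1), ∑ r ∈ Finset.range (n+1), ∑ s ∈ Finset.range (n+1),
            ∑ b ∈ Finset.range (n+1), F r s a b := Finset.sum_comm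
      _ = ∑ a ∈ Finset.range (n+1), ∑ r ∈ Finset.range (n+1), ∑ b ∈ Finset.range (n+1),
            ∑ s ∈ Finset.range (n+1), F r s a b :=
          Finset.sum_congr rfl fun a _ => Finset.sum_congr rfl fun r _ => Finset.sum_comm
      _ = ∑ a ∈ Finset.range (n+1), ∑ b ∈ Finset.range (n+1), ∑ r ∈ Finset.range (n+1),
            ∑ s ∈ Finset.range (n+1), F r s a b :=
          Finset.sum_congr rfl fun a _ => Finset.sum_comm
end
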